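/- (Rohlin lemma for tiles, Ornstein–Weiss) Let G be a countable amenable group (i.e., G admits a Følner sequence), let T be a tile for G, and let G ↷ (X, μ) be an essentially free p.m.p. action on a standard probability space. Then for every ε > 0 there exists a Borel subset B ⊆ X such that the family {tB}_{t ∈ T} is pairwise disjoint and μ(⋃_{t ∈ T} tB) > 1 − ε. -/

import Mathlib

open MeasureTheory Filter
open scoped symmDiff Classical

/-- A probability-measure-preserving action of a group `G` on `(X, μ)`:
a homomorphism from `G` to the measure-preserving Borel automorphisms of `(X, μ)`. -/
structure PMP (G : Type*) [Group G] (X : Type*) [MeasurableSpace X]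
    (μ : MeasureTheory.Measure X) where
  act : G → X ≃ᵐ X
  act_one : ∀ x : X, act 1 x = x
  act_mul : ∀ g h : G, ∀ x : X, act (g * h) x = act g (act h x)
  preserves : ∀ g : G, MeasureTheory.MeasurePreserving (act g) μ μ

namespace PMP

variable {G : Type*} [Group G] {X : Type*} [MeasurableSpace X] {μ : MeasureTheory.Measure X}

/-- An action is essentially free if a.e. point has trivial stabilizer. -/
def EssFree (α : PMP G X μ) : Prop :=
  ∀ᵐ x ∂μ, ∀ g : G, g ≠ 1 → α.act g x ≠ x

/-- The orbit of a point under a p.m.p. action. -/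
def orbit (α : PMP G X μ) (x : X) : Set X := Set.range fun g => α.act g x

/-- Two actions are orbit equivalent if some measure-preserving automorphism `R`
satisfies `G^α x = R G^β R⁻¹ x` for a.e. `x`. -/
def OrbitEquiv (α β : PMP G X μ) : Prop :=
  ∃ R : X ≃ᵐ X, MeasureTheory.MeasurePreserving R μ μ ∧
    ∀ᵐ x ∂μ, α.orbit x = R '' β.orbit (R.symm x)

end PMP

/-- A finite subset `T` of a group `G` is a tile if the right translates `Tc`,
`c ∈ C`, partition `G` for a suitable `C ⊆ G`. -/
def IsTile {G : Type*} [Group G] (T : Finset G) : Prop :=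
  ∃ C : Set G,
    (C.Pairwise fun c d => Disjoint ((fun t => t * c) '' (T : Set G)) ((fun t => t * d) '' (T : Set G))) ∧
    (⋃ c ∈ C, (fun t => t * c) '' (T : Set G)) = Set.univ

/-- A Følner sequence: nonempty finite sets that are asymptotically invariant. -/
def IsFolnerSeq {G : Type*} [Group G] (F : ℕ → Finset G) : Prop :=
  (∀ n, (F n).Nonempty) ∧
  ∀ g : G, Filter.Tendsto
    (fun n => ((((F n).image (fun t => g * t)) ∆ (F n)).card : ℝ) / ((F n).card : ℝ))
    Filter.atTop (nhds 0)

/-- `T` is `(F, ε)`-invariant: `|T ∆ gT| < ε |T|` for every `g ∈ F`. -/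
def IsInv {G : Type*} [Group G] (F T : Finset G) (ε : ℝ) : Prop :=
  ∀ g ∈ F, (((T ∆ (T.image (fun t => g * t))).card : ℝ)) < ε * T.card

open scoped Pointwise

namespace PMP

variable {G : Type*} [Group G] {X : Type*} [MeasurableSpace X]
  {μ : MeasureTheory.Measure X}

variable (α : PMP G X μ)

lemma act_inv_apply (g : G) (x : X) : α.act g⁻¹ (α.act g x) = x := by
  rw [← α.act_mul]; simp [α.act_one]

lemma act_apply_inv_self (g : G) (x : X) : α.act g (α.act g⁻¹ x) = x := by
  rw [← α.act_mul]; simp [α.act_one]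

lemma act_injective (g : G) : Function.Injective (α.act g) :=
  (α.act g).injective

lemma mem_image_act {g : G} {A : Set X} {x : X} :
    x ∈ α.act g '' A ↔ α.act g⁻¹ x ∈ A := by
  constructor
  · rintro ⟨a, ha, rfl⟩; rwa [α.act_inv_apply]
  · intro h; exact ⟨α.act g⁻¹ x, h, α.act_apply_inv_self g x⟩

lemma image_act_eq_preimage (g : G) (A : Set X) :
    α.act g '' A = α.act g⁻¹ ⁻¹' A := Set.ext fun _ => α.mem_image_act

lemma measurable_act (g : G) : Measurable (α.act g) := (α.act g).measurable

lemma measurableSet_image_act (g : G) {A : Set X} (hA : MeasurableSet A) :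
    MeasurableSet (α.act g '' A) := by
  rw [α.image_act_eq_preimage]; exact (α.measurable_act g⁻¹) hA

lemma measure_image_act (g : G) {A : Set X} (hA : MeasurableSet A) :
    μ (α.act g '' A) = μ A := by
  rw [α.image_act_eq_preimage]
  exact (α.preserves g⁻¹).measure_preimage hA.nullMeasurableSet

lemma image_act_image_act (g h : G) (A : Set X) :
    α.act g '' (α.act h '' A) = α.act (g * h) '' A := by
  ext x
  simp only [α.mem_image_act]
  rw [mul_inv_rev, α.act_mul]

lemma act_mem_image_act_iff (f g : G) (A : Set X) (x : X) :
    α.act f x ∈ α.act g '' A ↔ x ∈ α.act (f⁻¹ * g) '' A := by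
  rw [α.mem_image_act, α.mem_image_act, mul_inv_rev, inv_inv, α.act_mul]

lemma disjoint_image_act (g : G) {A B : Set X} (h : Disjoint A B) :
    Disjoint (α.act g '' A) (α.act g '' B) :=
  (Set.disjoint_image_iff (α.act_injective g)).2 h

/-- A measurable conull set of points with free orbit. -/
lemma exists_free_conull [Countable G] (hα : α.EssFree) :
    ∃ XF : Set X, MeasurableSet XF ∧ μ XFᶜ = 0 ∧
      ∀ x ∈ XF, ∀ g : G, g ≠ 1 → α.act g x ≠ x := by
  have h := hα
  rw [EssFree, MeasureTheory.ae_iff] at h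
  obtain ⟨N, hsub, hNm, hN0⟩ := MeasureTheory.exists_measurable_superset_of_null h
  refine ⟨Nᶜ, hNm.compl, by simpa using hN0, ?_⟩
  intro x hx g hg
  by_contra hcon
  exact hx (hsub (by simp only [Set.mem_setOf_eq]; push_neg; exact ⟨g, hg, hcon⟩))

/-- The separation lemma: inside any non-null measurable set of free points one can find a
non-null measurable subset whose `D`-translates are disjoint from it. -/
lemma exists_disjoint_base [Countable G]
    [HasCountableSeparatingOn X MeasurableSet Set.univ]
    (D : Finset G) (W : Set X) (hWm : MeasurableSet W)
    (hWfree : ∀ x ∈ W, ∀ g ∈ D, α.act g x ≠ x) (hWpos : μ W ≠ 0) :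
    ∃ A : Set X, MeasurableSet A ∧ A ⊆ W ∧ μ A ≠ 0 ∧
      ∀ g ∈ D, Disjoint (α.act g '' A) A := by
  obtain ⟨S, hSm, hSsep⟩ := exists_seq_separating X MeasurableSet.empty Set.univ
  set S2 : ℕ × Bool → Set X := fun p => if p.2 then S p.1 else (S p.1)ᶜ with hS2
  have hS2m : ∀ p, MeasurableSet (S2 p) := by
    intro p; rw [hS2]; dsimp only
    split
    · exact hSm _
    · exact (hSm _).compl
  have hsep : ∀ x y : X, x ≠ y → ∃ p, x ∈ S2 p ∧ y ∉ S2 p := by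
    intro x y hxy
    have : ¬ ∀ n, x ∈ S n ↔ y ∈ S n := fun h => hxy (hSsep x trivial y trivial h)
    push_neg at this
    obtain ⟨m, hm⟩ := this
    rcases hm with ⟨hx, hy⟩ | ⟨hx, hy⟩
    · exact ⟨(m, true), by simp [hS2, hx], by simp [hS2, hy]⟩
    · exact ⟨(m, false), by simp [hS2, hx], by simp [hS2, hy]⟩
  -- the candidate sets, indexed by choice functions on D
  set A : (((D : Finset G) : Type _) → ℕ × Bool) → Set X := fun c =>
    {x ∈ W | ∀ g : ((D : Finset G) : Type _), x ∈ S2 (c g) ∧ α.act g x ∉ S2 (c g)} with hA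
  have hAm : ∀ c, MeasurableSet (A c) := by
    intro c
    rw [hA]; dsimp only
    have : {x ∈ W | ∀ g : ((D : Finset G) : Type _), x ∈ S2 (c g) ∧ α.act g x ∉ S2 (c g)}
        = W ∩ ⋂ g : ((D : Finset G) : Type _),
          (S2 (c g) ∩ (α.act (g : G)) ⁻¹' (S2 (c g))ᶜ) := by
      ext x
      simp only [Set.mem_setOf_eq, Set.mem_inter_iff, Set.mem_iInter, Set.mem_preimage,
        Set.mem_compl_iff]
      try tauto
    rw [this]
    exact hWm.inter (MeasurableSet.iInter fun g =>
      ((hS2m (c g)).inter ((α.measurable_act g) (hS2m (c g)).compl)))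
  have hcover : W ⊆ ⋃ c, A c := by
    intro x hx
    have hch : ∀ g : ((D : Finset G) : Type _), ∃ p, x ∈ S2 p ∧ α.act (g : G) x ∉ S2 p := by
      intro g
      have := hWfree x hx g g.2
      exact hsep x (α.act (g : G) x) (fun h => this h.symm)
    choose c hc using hch
    exact Set.mem_iUnion.2 ⟨c, hx, fun g => hc g⟩
  have : ∃ c, μ (A c) ≠ 0 := by
    by_contra hall
    push_neg at hall
    have : μ (⋃ c, A c) = 0 := by
      exact measure_iUnion_null fun c => hall c
    exact hWpos (measure_mono_null hcover this)
  obtain ⟨c, hc⟩ := this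
  refine ⟨A c, hAm c, fun x hx => hx.1, hc, ?_⟩
  intro g hg
  rw [Set.disjoint_left]
  rintro y ⟨x, hxA, rfl⟩ hyA
  have h1 : α.act g x ∉ S2 (c ⟨g, hg⟩) := (hxA.2 ⟨g, hg⟩).2
  have h2 : α.act g x ∈ S2 (c ⟨g, hg⟩) := (hyA.2 ⟨g, hg⟩).1
  exact h1 h2

end PMP
open scoped ENNReal NNReal
namespace PMP

variable {G : Type*} [Group G] {X : Type*} [MeasurableSpace X]
  {μ : MeasureTheory.Measure X}

lemma image_act_one (α : PMP G X μ) (A : Set X) : α.act 1 '' A = A := by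
  have : ∀ x, α.act (1 : G) x = x := α.act_one
  rw [show ((α.act (1 : G) : X → X)) = id from funext this, Set.image_id]

/-- Exhaustion: a collection of measurable sets closed under countable monotone unions
contains an element maximal modulo null sets. -/
lemma exists_maximal_measure (μ : MeasureTheory.Measure X) [IsFiniteMeasure μ]
    (𝒜 : Set (Set X)) (hmeas : ∀ A ∈ 𝒜, MeasurableSet A) (h0 : ∅ ∈ 𝒜)
    (hchain : ∀ f : ℕ → Set X, (∀ n, f n ∈ 𝒜) → Monotone f → (⋃ n, f n) ∈ 𝒜) :
    ∃ A ∈ 𝒜, ∀ A' ∈ 𝒜, A ⊆ A' → μ (A' \ A) = 0 := by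
  classical
  set s : Set X → ℝ≥0∞ := fun A => sSup (μ '' {B | B ∈ 𝒜 ∧ A ⊆ B}) with hs
  have hsle : ∀ A, s A ≤ μ Set.univ := by
    intro A
    refine sSup_le ?_
    rintro b ⟨B, _, rfl⟩
    exact measure_mono (Set.subset_univ B)
  have hsne : ∀ A, s A ≠ ⊤ := fun A =>
    ne_top_of_le_ne_top (measure_ne_top μ _) (hsle A)
  have hstep : ∀ A ∈ 𝒜, ∀ n : ℕ,
      ∃ A', A' ∈ 𝒜 ∧ A ⊆ A' ∧ s A ≤ μ A' + (2 ^ n : ℝ≥0∞)⁻¹ := by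
    intro A hA n
    set δ : ℝ≥0∞ := (2 ^ n : ℝ≥0∞)⁻¹ with hδdef
    have hδ : 0 < δ := ENNReal.inv_pos.mpr (by simp)
    by_cases hsz : s A ≤ δ
    · exact ⟨A, hA, subset_rfl, le_trans hsz le_add_self⟩
    · push_neg at hsz
      have h1 : s A - δ < s A :=
        ENNReal.sub_lt_self (hsne A) (lt_of_le_of_lt zero_le hsz).ne' hδ.ne'
      obtain ⟨b, ⟨B, ⟨hB, hAB⟩, rfl⟩, hb⟩ := lt_sSup_iff.mp h1
      exact ⟨B, hB, hAB, tsub_le_iff_right.mp hb.le⟩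
  choose ext hext1 hext2 hext3 using hstep
  let f : ℕ → {A : Set X // A ∈ 𝒜} := fun n =>
    Nat.rec ⟨∅, h0⟩ (fun n p => ⟨ext p.1 p.2 n, hext1 p.1 p.2 n⟩) n
  have hfsucc : ∀ n, (f (n + 1)).1 = ext (f n).1 (f n).2 n := fun n => rfl
  have hmono : Monotone (fun n => (f n).1) := by
    refine monotone_nat_of_le_succ ?_
    intro n
    rw [hfsucc]
    exact hext2 (f n).1 (f n).2 n
  set A : Set X := ⋃ n, (f n).1 with hAdef
  have hA : A ∈ 𝒜 := hchain _ (fun n => (f n).2) hmono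
  refine ⟨A, hA, ?_⟩
  intro A' hA' hsub
  have hle : μ A' ≤ μ A := by
    refine ENNReal.le_of_forall_pos_le_add ?_
    intro ε hε _
    obtain ⟨n, hn⟩ := ENNReal.exists_inv_two_pow_lt (by exact_mod_cast hε.ne' : (ε : ℝ≥0∞) ≠ 0)
    have h1 : μ A' ≤ s (f n).1 := by
      refine le_sSup ?_
      exact ⟨A', ⟨hA', le_trans (le_trans (Set.subset_iUnion (fun n => (f n).1) n) subset_rfl) hsub⟩, rfl⟩
    have h2 : s (f n).1 ≤ μ (f (n + 1)).1 + (2 ^ n : ℝ≥0∞)⁻¹ := by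
      rw [hfsucc]; exact hext3 (f n).1 (f n).2 n
    have h3 : μ (f (n + 1)).1 ≤ μ A := measure_mono (Set.subset_iUnion (fun n => (f n).1) (n + 1))
    have h4 : ((2 : ℝ≥0∞) ^ n)⁻¹ ≤ ε := by
      rw [← ENNReal.inv_pow] at hn; exact hn.le
    calc μ A' ≤ μ (f (n + 1)).1 + (2 ^ n : ℝ≥0∞)⁻¹ := le_trans h1 h2
      _ ≤ μ A + ε := add_le_add h3 h4
  have hAmeas : MeasurableSet A := hmeas A hA
  rw [measure_diff hsub hAmeas.nullMeasurableSet (measure_ne_top μ A)]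
  exact tsub_eq_zero_of_le hle

/-- Step lemma: a maximal tower base over the eligible set `D`. -/
lemma step_lemma [Countable G] [HasCountableSeparatingOn X MeasurableSet Set.univ]
    (α : PMP G X μ) [IsFiniteMeasure μ]
    (F : Finset G) (hF : F.Nonempty) (D : Set X) (hD : MeasurableSet D)
    (hfree : ∀ x ∈ D, ∀ g : G, g ≠ 1 → α.act g x ≠ x) :
    ∃ A : Set X, MeasurableSet A ∧ A ⊆ D ∧
      (∀ f ∈ F, ∀ f' ∈ F, f ≠ f' → Disjoint (α.act f '' A) (α.act f' '' A)) ∧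
      μ (D \ ⋃ g ∈ (F⁻¹ * F : Finset G), α.act g '' A) = 0 := by
  classical
  have h1mem : (1 : G) ∈ (F⁻¹ * F : Finset G) := by
    obtain ⟨f, hf⟩ := hF
    have : f⁻¹ * f = (1 : G) := inv_mul_cancel f
    rw [← this]
    exact Finset.mul_mem_mul (Finset.inv_mem_inv hf) hf
  set 𝒜 : Set (Set X) := {A | MeasurableSet A ∧ A ⊆ D ∧
      ∀ f ∈ F, ∀ f' ∈ F, f ≠ f' → Disjoint (α.act f '' A) (α.act f' '' A)} with h𝒜
  have h0 : ∅ ∈ 𝒜 := ⟨MeasurableSet.empty, Set.empty_subset _, by simp⟩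
  have hchain : ∀ f : ℕ → Set X, (∀ n, f n ∈ 𝒜) → Monotone f → (⋃ n, f n) ∈ 𝒜 := by
    intro f hf hm
    refine ⟨MeasurableSet.iUnion (fun n => (hf n).1), Set.iUnion_subset (fun n => (hf n).2.1), ?_⟩
    intro a ha b hb hab
    rw [Set.disjoint_left]
    rintro x hxa hxb
    rw [Set.image_iUnion, Set.mem_iUnion] at hxa hxb
    obtain ⟨n, hxa⟩ := hxa
    obtain ⟨m, hxb⟩ := hxb
    have h1 : x ∈ α.act a '' f (max n m) :=
      Set.image_mono (hm (le_max_left n m)) hxa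
    have h2 : x ∈ α.act b '' f (max n m) :=
      Set.image_mono (hm (le_max_right n m)) hxb
    exact Set.disjoint_left.mp ((hf (max n m)).2.2 a ha b hb hab) h1 h2
  obtain ⟨A, hA, hmax⟩ := exists_maximal_measure μ 𝒜 (fun A hA => hA.1) h0 hchain
  refine ⟨A, hA.1, hA.2.1, hA.2.2, ?_⟩
  by_contra hW
  set W : Set X := D \ ⋃ g ∈ (F⁻¹ * F : Finset G), α.act g '' A with hWdef
  have hWm : MeasurableSet W :=
    hD.diff (MeasurableSet.biUnion (Finset.countable_toSet _)
      (fun g _ => α.measurableSet_image_act g hA.1))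
  have hWfree : ∀ x ∈ W, ∀ g ∈ ((F⁻¹ * F : Finset G).erase 1), α.act g x ≠ x := by
    intro x hx g hg
    exact hfree x hx.1 g (Finset.ne_of_mem_erase hg)
  obtain ⟨A'', hA''m, hA''W, hA''pos, hA''disj⟩ :=
    α.exists_disjoint_base ((F⁻¹ * F : Finset G).erase 1) W hWm hWfree hW
  -- A ∪ A'' is again in 𝒜
  have hmem : A ∪ A'' ∈ 𝒜 := by
    refine ⟨hA.1.union hA''m, Set.union_subset hA.2.1 (hA''W.trans Set.diff_subset), ?_⟩
    intro a ha b hb hab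
    rw [Set.image_union, Set.image_union, Set.disjoint_left]
    rintro x (hxa | hxa) (hxb | hxb)
    · exact Set.disjoint_left.mp (hA.2.2 a ha b hb hab) hxa hxb
    · -- x ∈ a A, x ∈ b A''
      obtain ⟨y, hy, rfl⟩ := hxb
      have : α.act b y ∈ α.act a '' A := hxa
      rw [α.act_mem_image_act_iff] at this
      have hyW : y ∈ W := hA''W hy
      refine hyW.2 ?_
      exact Set.mem_biUnion (Finset.mul_mem_mul (Finset.inv_mem_inv hb) ha) this
    · obtain ⟨y, hy, rfl⟩ := hxa
      have : α.act a y ∈ α.act b '' A := hxb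
      rw [α.act_mem_image_act_iff] at this
      have hyW : y ∈ W := hA''W hy
      refine hyW.2 ?_
      exact Set.mem_biUnion (Finset.mul_mem_mul (Finset.inv_mem_inv ha) hb) this
    · obtain ⟨y, hy, rfl⟩ := hxb
      have : α.act b y ∈ α.act a '' A'' := hxa
      rw [α.act_mem_image_act_iff] at this
      have hmemD : b⁻¹ * a ∈ (F⁻¹ * F : Finset G).erase 1 := by
        refine Finset.mem_erase.mpr ⟨?_, Finset.mul_mem_mul (Finset.inv_mem_inv hb) ha⟩
        intro hcon
        exact hab (by rw [← inv_inv b, ← mul_one b⁻¹⁻¹, ← hcon]; group)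
      exact Set.disjoint_left.mp (hA''disj _ hmemD) this hy
  -- contradiction with maximality
  have := hmax (A ∪ A'') hmem Set.subset_union_left
  have hsub : A'' ⊆ (A ∪ A'') \ A := by
    intro x hx
    refine ⟨Set.mem_union_right _ hx, ?_⟩
    intro hxA
    have : x ∈ ⋃ g ∈ (F⁻¹ * F : Finset G), α.act g '' A := by
      refine Set.mem_biUnion h1mem ?_
      rw [α.image_act_one]
      exact hxA
    exact (hA''W hx).2 this
  exact hA''pos (measure_mono_null hsub this)

end PMP
namespace PMP

open scoped ENNReal

variable {G : Type*} [Group G] {X : Type*} [MeasurableSpace X]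
  {μ : MeasureTheory.Measure X}

/-- One stage of the Ornstein–Weiss construction: starting from an already covered set `U₀`,
add countably many `ε`-trimmed towers with shapes contained in `F`, pairwise disjoint and
disjoint from `U₀`, so that afterwards a.e. point sees more than `ε |F|` of its `F`-translates
inside the covered region. -/
lemma stage_lemma [Countable G] [HasCountableSeparatingOn X MeasurableSet Set.univ]
    (α : PMP G X μ) [IsProbabilityMeasure μ]
    (XF : Set X) (hXFm : MeasurableSet XF) (hXFc : μ XFᶜ = 0)
    (hXFfree : ∀ x ∈ XF, ∀ g : G, g ≠ 1 → α.act g x ≠ x)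
    (F : Finset G) (hF : F.Nonempty) (ε : ℝ) (hε0 : 0 < ε) (hε1 : ε < 1)
    (U₀ : Set X) (hU₀ : MeasurableSet U₀) :
    ∃ (A : ℕ × Finset G → Set X) (S : ℕ × Finset G → Finset G),
      (∀ i, MeasurableSet (A i)) ∧
      (∀ i, S i ⊆ F) ∧
      (∀ i, (1 - ε) * (F.card : ℝ) ≤ ((S i).card : ℝ)) ∧
      (∀ i, ∀ f ∈ S i, Disjoint (α.act f '' A i) U₀) ∧
      (∀ i f j g, f ∈ S i → g ∈ S j → ¬(i = j ∧ f = g) →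
        Disjoint (α.act f '' A i) (α.act g '' A j)) ∧
      (∀ᵐ x ∂μ, ε * (F.card : ℝ) <
        ((F.filter (fun f => α.act f x ∈
          U₀ ∪ ⋃ i, ⋃ f ∈ S i, α.act f '' A i)).card : ℝ)) := by
  classical
  -- the sets of points whose `F`-orbit pattern relative to `U` is exactly `s`
  set Eset : Set X → Finset G → Set X := fun U s =>
    (⋂ f ∈ s, (α.act f) ⁻¹' U) ∩ (⋂ f ∈ F \ s, (α.act f) ⁻¹' Uᶜ) with hEdef
  have hEmeas : ∀ U, MeasurableSet U → ∀ s, MeasurableSet (Eset U s) := by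
    intro U hU s
    exact (MeasurableSet.biInter (Finset.countable_toSet _)
        (fun f _ => (α.measurable_act f) hU)).inter
      (MeasurableSet.biInter (Finset.countable_toSet _)
        (fun f _ => (α.measurable_act f) hU.compl))
  have hEmem : ∀ U s x, x ∈ Eset U s ↔
      (∀ f ∈ s, α.act f x ∈ U) ∧ (∀ f ∈ F \ s, α.act f x ∉ U) := by
    intro U s x
    simp only [hEdef, Set.mem_inter_iff, Set.mem_iInter, Set.mem_preimage, Set.mem_compl_iff]
  have hEfilter : ∀ U s, s ⊆ F → ∀ x, x ∈ Eset U s →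
      F.filter (fun f => α.act f x ∈ U) = s := by
    intro U s hs x hx
    rw [hEmem] at hx
    ext f
    simp only [Finset.mem_filter]
    constructor
    · rintro ⟨hfF, hfU⟩
      by_contra hfs
      exact hx.2 f (Finset.mem_sdiff.mpr ⟨hfF, hfs⟩) hfU
    · intro hfs
      exact ⟨hs hfs, hx.1 f hfs⟩
  have hEcover : ∀ U x, x ∈ Eset U (F.filter (fun f => α.act f x ∈ U)) := by
    intro U x
    rw [hEmem]
    refine ⟨fun f hf => (Finset.mem_filter.mp hf).2, fun f hf => ?_⟩
    rw [Finset.mem_sdiff, Finset.mem_filter] at hf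
    intro hU
    exact hf.2 ⟨hf.1, hU⟩
  have hEdisj : ∀ U s s', s ≠ s' → s ⊆ F → s' ⊆ F →
      Disjoint (Eset U s) (Eset U s') := by
    intro U s s' hss hs hs'
    rw [Set.disjoint_left]
    intro x hx hx'
    exact hss ((hEfilter U s hs x hx).symm.trans (hEfilter U s' hs' x hx'))
  -- qualifying patterns: at most an `ε` fraction of `F` already covered
  set qual : Finset (Finset G) := F.powerset.filter (fun s => (s.card : ℝ) ≤ ε * F.card)
    with hqual
  set Dset : Set X → Set X := fun U => XF ∩ ⋃ s ∈ qual, Eset U s with hDdef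
  have hDmeas : ∀ U, MeasurableSet U → MeasurableSet (Dset U) := by
    intro U hU
    exact hXFm.inter (MeasurableSet.biUnion (Finset.countable_toSet _)
      (fun s _ => hEmeas U hU s))
  have hDmem : ∀ U x, x ∈ Dset U ↔ x ∈ XF ∧
      ((F.filter (fun f => α.act f x ∈ U)).card : ℝ) ≤ ε * F.card := by
    intro U x
    constructor
    · rintro ⟨hxF, hxE⟩
      obtain ⟨s, hs, hxs⟩ := Set.mem_iUnion₂.mp hxE
      rw [hqual, Finset.mem_filter, Finset.mem_powerset] at hs
      rw [hEfilter U s hs.1 x hxs]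
      exact ⟨hxF, hs.2⟩
    · rintro ⟨hxF, hcard⟩
      refine ⟨hxF, Set.mem_iUnion₂.mpr ⟨F.filter (fun f => α.act f x ∈ U), ?_, hEcover U x⟩⟩
      rw [hqual, Finset.mem_filter, Finset.mem_powerset]
      exact ⟨Finset.filter_subset _ _, hcard⟩
  have hDanti : ∀ U U' : Set X, U ⊆ U' → Dset U' ⊆ Dset U := by
    intro U U' hUU x hx
    rw [hDmem] at hx ⊢
    refine ⟨hx.1, le_trans ?_ hx.2⟩
    have : F.filter (fun f => α.act f x ∈ U) ⊆ F.filter (fun f => α.act f x ∈ U') :=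
      Finset.monotone_filter_right F (fun f _ hf => hUU hf)
    exact_mod_cast Finset.card_le_card this
  -- the maximal tower base over a given covered set
  have key : ∀ U : Set X, MeasurableSet U → ∃ A : Set X, MeasurableSet A ∧ A ⊆ Dset U ∧
      (∀ f ∈ F, ∀ f' ∈ F, f ≠ f' → Disjoint (α.act f '' A) (α.act f' '' A)) ∧
      μ (Dset U \ ⋃ g ∈ (F⁻¹ * F : Finset G), α.act g '' A) = 0 := by
    intro U hU
    exact α.step_lemma F hF (Dset U) (hDmeas U hU)
      (fun x hx => hXFfree x ((hDmem U x).mp hx).1)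
  choose stepA hstep1 hstep2 hstep3 hstep4 using key
  -- the recursion over steps
  let Useq : ℕ → {U : Set X // MeasurableSet U} := fun n =>
    Nat.rec ⟨U₀, hU₀⟩ (fun _ p =>
      ⟨p.1 ∪ ⋃ s ∈ qual, ⋃ f ∈ F \ s, α.act f '' (stepA p.1 p.2 ∩ Eset p.1 s),
        p.2.union (MeasurableSet.biUnion (Finset.countable_toSet _) (fun s _ =>
          MeasurableSet.biUnion (Finset.countable_toSet _) (fun f _ =>
            α.measurableSet_image_act f ((hstep1 p.1 p.2).inter (hEmeas p.1 p.2 s)))))⟩) n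
  set piece : ℕ → Finset G → Set X := fun j s =>
    stepA (Useq j).1 (Useq j).2 ∩ Eset (Useq j).1 s with hpiece
  have hpiecemeas : ∀ j s, MeasurableSet (piece j s) := fun j s =>
    (hstep1 (Useq j).1 (Useq j).2).inter (hEmeas (Useq j).1 (Useq j).2 s)
  have hUsucc : ∀ j, (Useq (j + 1)).1 =
      (Useq j).1 ∪ ⋃ s ∈ qual, ⋃ f ∈ F \ s, α.act f '' piece j s := fun j => rfl
  have hU0 : (Useq 0).1 = U₀ := rfl
  have hUmono : Monotone (fun j => (Useq j).1) := by
    refine monotone_nat_of_le_succ (fun j => ?_)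
    rw [hUsucc]
    exact Set.subset_union_left
  have hqualsub : ∀ s ∈ qual, s ⊆ F ∧ (s.card : ℝ) ≤ ε * F.card := by
    intro s hs
    rw [hqual, Finset.mem_filter, Finset.mem_powerset] at hs
    exact hs
  -- pieces avoid the current covered set
  have hpartout : ∀ j s, ∀ f ∈ F \ s, ∀ x ∈ piece j s, α.act f x ∉ (Useq j).1 := by
    intro j s f hf x hx
    exact ((hEmem (Useq j).1 s x).mp hx.2).2 f hf
  have hpartin : ∀ j, ∀ s ∈ qual, ∀ f ∈ F \ s,
      α.act f '' piece j s ⊆ (Useq (j + 1)).1 := by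
    intro j s hs f hf
    rw [hUsucc]
    intro y hy
    exact Set.mem_union_right _ (Set.mem_biUnion hs (Set.mem_biUnion hf hy))
  have hstepdecomp : ∀ j, stepA (Useq j).1 (Useq j).2 = ⋃ s ∈ qual, piece j s := by
    intro j
    apply Set.Subset.antisymm
    · intro x hx
      have hxD := hstep2 (Useq j).1 (Useq j).2 hx
      rw [hDmem] at hxD
      refine Set.mem_biUnion (show F.filter (fun f => α.act f x ∈ (Useq j).1) ∈ qual from ?_)
        ⟨hx, hEcover (Useq j).1 x⟩
      rw [hqual, Finset.mem_filter, Finset.mem_powerset]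
      exact ⟨Finset.filter_subset _ _, hxD.2⟩
    · exact Set.iUnion₂_subset (fun s _ => Set.inter_subset_left)
  -- the final objects
  set A : ℕ × Finset G → Set X := fun i => if i.2 ∈ qual then piece i.1 i.2 else ∅ with hA
  set S : ℕ × Finset G → Finset G := fun i => if i.2 ∈ qual then F \ i.2 else F with hS
  have hAmeas : ∀ i, MeasurableSet (A i) := by
    intro i
    rw [hA]
    dsimp only
    split
    · exact hpiecemeas i.1 i.2
    · exact MeasurableSet.empty
  have hSsub : ∀ i, S i ⊆ F := by
    intro i
    rw [hS]
    dsimp only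
    split
    · exact Finset.sdiff_subset
    · exact subset_rfl
  have hFpos : 0 < (F.card : ℝ) := by
    have := Finset.card_pos.mpr hF
    exact_mod_cast this
  have hScard : ∀ i, (1 - ε) * (F.card : ℝ) ≤ ((S i).card : ℝ) := by
    intro i
    rw [hS]
    dsimp only
    split
    · rename_i hq
      obtain ⟨hsub, hcard⟩ := hqualsub i.2 hq
      rw [Finset.card_sdiff_of_subset hsub]
      have h1 : (i.2.card : ℝ) ≤ (F.card : ℝ) := by
        exact_mod_cast Finset.card_le_card hsub
      push_cast [Nat.cast_sub (Finset.card_le_card hsub)]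
      nlinarith
    · nlinarith
  -- parts avoid U₀
  have hpartU₀ : ∀ i, ∀ f ∈ S i, Disjoint (α.act f '' A i) U₀ := by
    rintro ⟨j, s⟩ f hf
    by_cases hq : s ∈ qual
    · have e₁ : A (j, s) = piece j s := if_pos hq
      have e₂ : S (j, s) = F \ s := if_pos hq
      rw [e₁]
      rw [e₂] at hf
      rw [Set.disjoint_left]
      rintro x ⟨y, hy, rfl⟩ hxU
      exact hpartout j s f hf y hy (hUmono (Nat.zero_le j) hxU)
    · have e₁ : A (j, s) = ∅ := if_neg hq
      rw [e₁, Set.image_empty]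
      exact Set.empty_disjoint _
  -- global pairwise disjointness of the parts
  have hdisjJ : ∀ j₁ s₁ f j₂ s₂ g, s₁ ∈ qual → s₂ ∈ qual → f ∈ F \ s₁ → g ∈ F \ s₂ →
      ¬(j₁ = j₂ ∧ s₁ = s₂ ∧ f = g) →
      Disjoint (α.act f '' piece j₁ s₁) (α.act g '' piece j₂ s₂) := by
    have hcase : ∀ j₁ s₁ f j₂ s₂ g, s₁ ∈ qual → s₂ ∈ qual → f ∈ F \ s₁ → g ∈ F \ s₂ →
        j₁ < j₂ → Disjoint (α.act f '' piece j₁ s₁) (α.act g '' piece j₂ s₂) := by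
      intro j₁ s₁ f j₂ s₂ g hq₁ hq₂ hf hg hlt
      rw [Set.disjoint_left]
      intro x hx₁ hx₂
      have h1 : x ∈ (Useq (j₁ + 1)).1 := hpartin j₁ s₁ hq₁ f hf hx₁
      have h2 : x ∈ (Useq j₂).1 := hUmono hlt h1
      obtain ⟨y, hy, rfl⟩ := hx₂
      exact hpartout j₂ s₂ g hg y hy h2
    intro j₁ s₁ f j₂ s₂ g hq₁ hq₂ hf hg hne
    rcases lt_trichotomy j₁ j₂ with hlt | heq | hgt
    · exact hcase j₁ s₁ f j₂ s₂ g hq₁ hq₂ hf hg hlt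
    · subst heq
      by_cases hfg : f = g
      · subst hfg
        have hss : s₁ ≠ s₂ := by
          intro hss; exact hne ⟨rfl, hss, rfl⟩
        refine α.disjoint_image_act f ?_
        exact Set.disjoint_of_subset Set.inter_subset_right Set.inter_subset_right
          (hEdisj (Useq j₁).1 s₁ s₂ hss (hqualsub s₁ hq₁).1 (hqualsub s₂ hq₂).1)
      · refine Set.disjoint_of_subset (Set.image_mono Set.inter_subset_left)
          (Set.image_mono Set.inter_subset_left) ?_
        exact hstep3 (Useq j₁).1 (Useq j₁).2 f (Finset.mem_sdiff.mp hf).1 g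
          (Finset.mem_sdiff.mp hg).1 hfg
    · exact (hcase j₂ s₂ g j₁ s₁ f hq₂ hq₁ hg hf hgt).symm
  have hdisj : ∀ i f j g, f ∈ S i → g ∈ S j → ¬(i = j ∧ f = g) →
      Disjoint (α.act f '' A i) (α.act g '' A j) := by
    rintro ⟨j₁, s₁⟩ f ⟨j₂, s₂⟩ g hfi hgj hne
    by_cases hq₁ : s₁ ∈ qual
    · by_cases hq₂ : s₂ ∈ qual
      · have e₁ : A (j₁, s₁) = piece j₁ s₁ := if_pos hq₁
        have e₂ : A (j₂, s₂) = piece j₂ s₂ := if_pos hq₂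
        have e₃ : S (j₁, s₁) = F \ s₁ := if_pos hq₁
        have e₄ : S (j₂, s₂) = F \ s₂ := if_pos hq₂
        rw [e₁, e₂]
        rw [e₃] at hfi
        rw [e₄] at hgj
        refine hdisjJ j₁ s₁ f j₂ s₂ g hq₁ hq₂ hfi hgj ?_
        rintro ⟨h1, h2, h3⟩
        exact hne ⟨by rw [h1, h2], h3⟩
      · have e₂ : A (j₂, s₂) = ∅ := if_neg hq₂
        rw [e₂, Set.image_empty]
        exact Set.disjoint_empty _
    · have e₁ : A (j₁, s₁) = ∅ := if_neg hq₁
      rw [e₁, Set.image_empty]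
      exact Set.empty_disjoint _
  -- per-step measure bound and disjointness of the per-step unions
  set W : ℕ → Set X := fun j => ⋃ s ∈ qual, ⋃ f ∈ F \ s, α.act f '' piece j s with hW
  have hWmeas : ∀ j, MeasurableSet (W j) := by
    intro j
    exact MeasurableSet.biUnion (Finset.countable_toSet _) (fun s _ =>
      MeasurableSet.biUnion (Finset.countable_toSet _) (fun f _ =>
        α.measurableSet_image_act f (hpiecemeas j s)))
  set cE : ℝ≥0∞ := ENNReal.ofReal ((1 - ε) * F.card) with hcE
  have hcE0 : cE ≠ 0 := by
    rw [hcE]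
    simp only [ne_eq, ENNReal.ofReal_eq_zero, not_le]
    nlinarith
  have hcEtop : cE ≠ ⊤ := ENNReal.ofReal_ne_top
  have hnew_lb : ∀ j, cE * μ (stepA (Useq j).1 (Useq j).2) ≤ μ (W j) := by
    intro j
    have hBdisj : (↑qual : Set (Finset G)).PairwiseDisjoint
        (fun s => ⋃ f ∈ F \ s, α.act f '' piece j s) := by
      intro s₁ hs₁ s₂ hs₂ hss
      rw [Function.onFun, Set.disjoint_left]
      intro x hx₁ hx₂
      obtain ⟨f, hf, hxf⟩ := Set.mem_iUnion₂.mp hx₁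
      obtain ⟨g, hg, hxg⟩ := Set.mem_iUnion₂.mp hx₂
      exact Set.disjoint_left.mp (hdisjJ j s₁ f j s₂ g hs₁ hs₂ hf hg
        (fun h => hss h.2.1)) hxf hxg
    have hBmeas : ∀ s ∈ qual, MeasurableSet (⋃ f ∈ F \ s, α.act f '' piece j s) :=
      fun s _ => MeasurableSet.biUnion (Finset.countable_toSet _) (fun f _ =>
        α.measurableSet_image_act f (hpiecemeas j s))
    rw [hW]
    dsimp only
    rw [measure_biUnion_finset hBdisj hBmeas]
    have hinner : ∀ s ∈ qual, μ (⋃ f ∈ F \ s, α.act f '' piece j s) =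
        ((F \ s).card : ℝ≥0∞) * μ (piece j s) := by
      intro s hs
      have hidisj : (↑(F \ s) : Set G).PairwiseDisjoint
          (fun f => α.act f '' piece j s) := by
        intro f hf g hg hfg
        rw [Function.onFun]
        exact hdisjJ j s f j s g hs hs hf hg (fun h => hfg h.2.2)
      rw [measure_biUnion_finset hidisj (fun f _ => α.measurableSet_image_act f (hpiecemeas j s))]
      rw [Finset.sum_congr rfl (fun f _ => α.measure_image_act f (hpiecemeas j s))]
      rw [Finset.sum_const, nsmul_eq_mul]
    rw [Finset.sum_congr rfl hinner]
    have hcoef : ∀ s ∈ qual, cE * μ (piece j s) ≤ ((F \ s).card : ℝ≥0∞) * μ (piece j s) := by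
      intro s hs
      refine mul_le_mul_left ?_ _
      rw [hcE, ← ENNReal.ofReal_natCast]
      refine ENNReal.ofReal_le_ofReal ?_
      obtain ⟨hsub, hcard⟩ := hqualsub s hs
      rw [Finset.card_sdiff_of_subset hsub]
      push_cast [Nat.cast_sub (Finset.card_le_card hsub)]
      nlinarith
    calc cE * μ (stepA (Useq j).1 (Useq j).2)
        = cE * ∑ s ∈ qual, μ (piece j s) := by
          rw [hstepdecomp j, measure_biUnion_finset ?_ (fun s _ => hpiecemeas j s)]
          intro s₁ hs₁ s₂ hs₂ hss
          rw [Function.onFun]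
          exact Set.disjoint_of_subset Set.inter_subset_right Set.inter_subset_right
            (hEdisj (Useq j).1 s₁ s₂ hss (hqualsub s₁ hs₁).1 (hqualsub s₂ hs₂).1)
      _ = ∑ s ∈ qual, cE * μ (piece j s) := by rw [Finset.mul_sum]
      _ ≤ ∑ s ∈ qual, ((F \ s).card : ℝ≥0∞) * μ (piece j s) := Finset.sum_le_sum hcoef
  have hWdisj : Pairwise (Function.onFun Disjoint W) := by
    intro j₁ j₂ hne
    rw [Function.onFun, hW]
    dsimp only
    rw [Set.disjoint_left]
    intro x hx₁ hx₂
    obtain ⟨s₁, hs₁, hx₁⟩ := Set.mem_iUnion₂.mp hx₁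
    obtain ⟨f, hf, hxf⟩ := Set.mem_iUnion₂.mp hx₁
    obtain ⟨s₂, hs₂, hx₂⟩ := Set.mem_iUnion₂.mp hx₂
    obtain ⟨g, hg, hxg⟩ := Set.mem_iUnion₂.mp hx₂
    exact Set.disjoint_left.mp
      (hdisjJ j₁ s₁ f j₂ s₂ g hs₁ hs₂ hf hg (fun h => hne h.1)) hxf hxg
  have htsum : ∑' j, μ (W j) ≠ ⊤ := by
    rw [← MeasureTheory.measure_iUnion hWdisj hWmeas]
    exact measure_ne_top μ _
  have hWtend : Filter.Tendsto (fun j => μ (W j)) Filter.atTop (nhds 0) :=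
    ENNReal.tendsto_atTop_zero_of_tsum_ne_top htsum
  -- the limit covered set
  set Uω : Set X := ⋃ j, (Useq j).1 with hUω
  have hUωsup : ∀ j, (Useq j).1 ⊆ Uω := fun j => Set.subset_iUnion (fun j => (Useq j).1) j
  have hDbound : ∀ j, μ (Dset Uω) ≤
      (((F⁻¹ * F : Finset G).card : ℝ≥0∞) / cE) * μ (W j) := by
    intro j
    have h1 : μ (Dset Uω) ≤ μ (Dset (Useq j).1) := measure_mono (hDanti _ _ (hUωsup j))
    have h2 : μ (Dset (Useq j).1) ≤
        μ (Dset (Useq j).1 \ ⋃ g ∈ (F⁻¹ * F : Finset G), α.act g '' stepA (Useq j).1 (Useq j).2)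
        + μ (⋃ g ∈ (F⁻¹ * F : Finset G), α.act g '' stepA (Useq j).1 (Useq j).2) := by
      refine le_trans (measure_mono (fun x hx => ?_)) (MeasureTheory.measure_union_le _ _)
      by_cases hxY : x ∈ ⋃ g ∈ (F⁻¹ * F : Finset G), α.act g '' stepA (Useq j).1 (Useq j).2
      · exact Set.mem_union_right _ hxY
      · exact Set.mem_union_left _ ⟨hx, hxY⟩
    rw [hstep4 (Useq j).1 (Useq j).2, zero_add] at h2
    have h3 : μ (⋃ g ∈ (F⁻¹ * F : Finset G), α.act g '' stepA (Useq j).1 (Useq j).2)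
        ≤ ((F⁻¹ * F : Finset G).card : ℝ≥0∞) * μ (stepA (Useq j).1 (Useq j).2) := by
      refine le_trans (MeasureTheory.measure_biUnion_finset_le _ _) ?_
      rw [Finset.sum_congr rfl (fun g _ =>
        α.measure_image_act g (hstep1 (Useq j).1 (Useq j).2))]
      rw [Finset.sum_const, nsmul_eq_mul]
    have h4 : μ (stepA (Useq j).1 (Useq j).2) ≤ μ (W j) / cE := by
      rw [ENNReal.le_div_iff_mul_le (Or.inl hcE0) (Or.inl hcEtop), mul_comm]
      exact hnew_lb j
    calc μ (Dset Uω) ≤ ((F⁻¹ * F : Finset G).card : ℝ≥0∞) *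
          μ (stepA (Useq j).1 (Useq j).2) := le_trans h1 (le_trans h2 h3)
      _ ≤ ((F⁻¹ * F : Finset G).card : ℝ≥0∞) * (μ (W j) / cE) := mul_le_mul_right h4 _
      _ = (((F⁻¹ * F : Finset G).card : ℝ≥0∞) / cE) * μ (W j) := by
          rw [div_eq_mul_inv, div_eq_mul_inv]; ring
  have hDω0 : μ (Dset Uω) = 0 := by
    have htend : Filter.Tendsto
        (fun j => (((F⁻¹ * F : Finset G).card : ℝ≥0∞) / cE) * μ (W j))
        Filter.atTop (nhds 0) := by
      have hKtop : (((F⁻¹ * F : Finset G).card : ℝ≥0∞) / cE) ≠ ⊤ := by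
        rw [div_eq_mul_inv]
        exact ENNReal.mul_ne_top (by simp) (ENNReal.inv_ne_top.mpr hcE0)
      have htmp := ENNReal.Tendsto.const_mul
        (a := ((F⁻¹ * F : Finset G).card : ℝ≥0∞) / cE) hWtend (Or.inr hKtop)
      rw [mul_zero] at htmp
      exact htmp
    have := ge_of_tendsto' htend (fun j => hDbound j)
    exact le_antisymm this zero_le
  -- the covered set equals the union of towers
  have hUnion_eq : U₀ ∪ ⋃ i, ⋃ f ∈ S i, α.act f '' A i = Uω := by
    apply Set.Subset.antisymm
    · refine Set.union_subset (hUωsup 0) ?_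
      refine Set.iUnion_subset (fun i => Set.iUnion₂_subset (fun f hf => ?_))
      by_cases hq : i.2 ∈ qual
      · have e₁ : A i = piece i.1 i.2 := if_pos hq
        have e₂ : S i = F \ i.2 := if_pos hq
        rw [e₂] at hf
        rw [e₁]
        exact le_trans (hpartin i.1 i.2 hq f hf) (hUωsup (i.1 + 1))
      · have e₁ : A i = ∅ := if_neg hq
        rw [e₁, Set.image_empty]
        exact Set.empty_subset _
    · refine Set.iUnion_subset (fun j => ?_)
      induction j with
      | zero => exact Set.subset_union_left
      | succ j ih =>
        rw [hUsucc]
        refine Set.union_subset ih ?_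
        refine Set.iUnion₂_subset (fun s hs => Set.iUnion₂_subset (fun f hf => ?_))
        refine Set.subset_union_of_subset_right ?_ _
        have h1 : piece j s = A (j, s) := (if_pos hs).symm
        have h2 : f ∈ S (j, s) := by
          rw [show S (j, s) = F \ s from if_pos hs]; exact hf
        rw [h1]
        intro y hy
        exact Set.mem_iUnion.mpr ⟨(j, s), Set.mem_biUnion h2 hy⟩
  refine ⟨A, S, hAmeas, hSsub, hScard, hpartU₀, hdisj, ?_⟩
  rw [MeasureTheory.ae_iff]
  refine measure_mono_null (fun x hx => ?_) (by
    have : μ (XFᶜ ∪ Dset Uω) = 0 :=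
      measure_union_null hXFc hDω0
    exact this)
  simp only [Set.mem_setOf_eq, not_lt] at hx
  by_cases hxF : x ∈ XF
  · refine Set.mem_union_right _ ?_
    rw [hDmem]
    simp only [hUnion_eq] at hx
    exact ⟨hxF, hx⟩
  · exact Set.mem_union_left _ hxF


end PMP
section Finitary

open scoped Pointwise

variable {G : Type*} [Group G]

/-- Uniqueness of tile decomposition. -/
lemma tile_unique (T : Finset G) (C : Set G)
    (hCdisj : C.Pairwise fun c d => Disjoint ((fun t => t * c) '' (T : Set G))
      ((fun t => t * d) '' (T : Set G)))
    {c c' t t' : G} (hc : c ∈ C) (hc' : c' ∈ C) (ht : t ∈ T) (ht' : t' ∈ T)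
    (heq : t * c = t' * c') : c = c' ∧ t = t' := by
  have hcc : c = c' := by
    by_contra hne
    have hd : Disjoint ((fun t => t * c) '' (T : Set G)) ((fun t => t * c') '' (T : Set G)) :=
      hCdisj hc hc' hne
    rw [Set.disjoint_left] at hd
    exact hd ⟨t, ht, rfl⟩ ⟨t', ht', heq.symm⟩
  subst hcc
  exact ⟨rfl, mul_right_cancel heq⟩

/-- Counting lemma: any finite set `S` is covered by the tiles it meets; the tiles fully inside
`S` account for all of `S` except boundary terms. -/
lemma tile_count (T : Finset G) (C : Set G)
    (hCdisj : C.Pairwise fun c d => Disjoint ((fun t => t * c) '' (T : Set G))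
      ((fun t => t * d) '' (T : Set G)))
    (hCcover : (⋃ c ∈ C, (fun t => t * c) '' (T : Set G)) = Set.univ)
    (S : Finset G) :
    ∃ Cs : Finset G, (↑Cs : Set G) ⊆ C ∧ (∀ c ∈ Cs, ∀ t ∈ T, t * c ∈ S) ∧
      S.card ≤ T.card * (Cs.card + ((T * T⁻¹ * S) \ S).card) := by
  classical
  have hcov : ∀ g : G, ∃ c, c ∈ C ∧ ∃ t, t ∈ T ∧ t * c = g := by
    intro g
    have : g ∈ (⋃ c ∈ C, (fun t => t * c) '' (T : Set G)) := by
      rw [hCcover]; trivial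
    obtain ⟨c, hc, t, ht, hg⟩ := Set.mem_iUnion₂.mp this
    exact ⟨c, hc, t, ht, hg⟩
  choose φ hφC τ hτT hτeq using hcov
  set I : Finset G := S.image φ with hI
  set Cs : Finset G := I.filter (fun c => ∀ t ∈ T, t * c ∈ S) with hCs
  set Ibad : Finset G := I.filter (fun c => ¬ ∀ t ∈ T, t * c ∈ S) with hIbad
  have hICsub : (↑I : Set G) ⊆ C := by
    intro c hcI
    obtain ⟨g, _, rfl⟩ := Finset.mem_image.mp hcI
    exact hφC g
  refine ⟨Cs, fun c hc => hICsub (Finset.filter_subset _ _ hc),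
    fun c hc => (Finset.mem_filter.mp hc).2, ?_⟩
  -- fiberwise count
  have hfib : S.card = ∑ c ∈ I, (S.filter (fun g => φ g = c)).card :=
    Finset.card_eq_sum_card_fiberwise (fun g hg => Finset.mem_image_of_mem φ hg)
  have hfible : ∀ c ∈ I, (S.filter (fun g => φ g = c)).card ≤ T.card := by
    intro c _
    refine Finset.card_le_card_of_injOn τ ?_ ?_
    · intro g hg
      exact hτT g
    · intro g hg g' hg' hτgg
      rw [Finset.coe_filter, Set.mem_setOf_eq] at hg hg'
      have h1 : τ g * c = g := by rw [← hg.2]; exact hτeq g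
      have h2 : τ g' * c = g' := by rw [← hg'.2]; exact hτeq g'
      rw [← h1, ← h2, hτgg]
  have hIsplit : I.card = Cs.card + Ibad.card := by
    rw [hCs, hIbad]
    rw [← Finset.card_filter_add_card_filter_not (p := fun c => ∀ t ∈ T, t * c ∈ S)]
  have hbad : Ibad.card ≤ ((T * T⁻¹ * S) \ S).card := by
    have hwit : ∀ c ∈ Ibad, ∃ t, t ∈ T ∧ t * c ∉ S := by
      intro c hc
      have := (Finset.mem_filter.mp hc).2
      push_neg at this
      obtain ⟨t, ht, hts⟩ := this
      exact ⟨t, ht, hts⟩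
    have hwit2 : ∀ c ∈ Ibad, ∃ g, g ∈ S ∧ φ g = c := by
      intro c hc
      have := Finset.mem_image.mp (Finset.filter_subset _ _ hc)
      obtain ⟨g, hg, rfl⟩ := this
      exact ⟨g, hg, rfl⟩
    choose tb htbT htbS using hwit
    choose gb hgbS hgbφ using hwit2
    refine Finset.card_le_card_of_injOn (fun c => if hc : c ∈ Ibad then tb c hc * c else c)
      ?_ ?_
    · intro c hc
      rw [Finset.mem_coe] at hc
      simp only [dif_pos hc]
      rw [Finset.mem_coe, Finset.mem_sdiff]
      refine ⟨?_, htbS c hc⟩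
      obtain ⟨g0, hg0S, hφ0⟩ : ∃ g, g ∈ S ∧ φ g = c := ⟨gb c hc, hgbS c hc, hgbφ c hc⟩
      have hge : τ g0 * c = g0 := by rw [← hφ0]; exact hτeq g0
      have h2 := congrArg (fun z => (τ g0)⁻¹ * z) hge.symm
      simp only [inv_mul_cancel_left] at h2
      have h3 : tb c hc * c = tb c hc * (τ g0)⁻¹ * g0 := by
        rw [mul_assoc, h2]
      rw [h3]
      exact Finset.mul_mem_mul (Finset.mul_mem_mul (htbT c hc)
        (Finset.inv_mem_inv (hτT g0))) hg0S
    · intro c hc c' hc' heq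
      rw [Finset.mem_coe] at hc hc'
      simp only [dif_pos hc, dif_pos hc'] at heq
      exact (tile_unique T C hCdisj (hICsub (Finset.filter_subset _ _ hc))
        (hICsub (Finset.filter_subset _ _ hc')) (htbT c hc) (htbT c' hc') heq).1
  calc S.card = ∑ c ∈ I, (S.filter (fun g => φ g = c)).card := hfib
    _ ≤ ∑ _c ∈ I, T.card := Finset.sum_le_sum hfible
    _ = T.card * I.card := by rw [Finset.sum_const, smul_eq_mul, mul_comm]
    _ = T.card * (Cs.card + Ibad.card) := by rw [hIsplit]
    _ ≤ T.card * (Cs.card + ((T * T⁻¹ * S) \ S).card) := by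
        exact Nat.mul_le_mul_left _ (Nat.add_le_add_left hbad _)

/-- From a Følner sequence, a nonempty set with small `K`-boundary. -/
lemma folner_choose (Fseq : ℕ → Finset G) (hFol : IsFolnerSeq Fseq)
    (K : Finset G) (δ : ℝ) (hδ : 0 < δ) :
    ∃ Fk : Finset G, Fk.Nonempty ∧ (((K * Fk) \ Fk).card : ℝ) ≤ δ * Fk.card := by
  classical
  obtain ⟨hne, htend⟩ := hFol
  set δ' : ℝ := δ / (K.card + 1) with hδ'
  have hδ'0 : 0 < δ' := by positivity
  have hev : ∀ᶠ n in Filter.atTop, ∀ g ∈ K,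
      ((((Fseq n).image (fun t => g * t)) ∆ (Fseq n)).card : ℝ) < δ' * (Fseq n).card := by
    rw [Filter.eventually_all_finset]
    intro g hg
    have h1 := htend g
    have h2 := h1.eventually (eventually_lt_nhds (by exact hδ'0 : (0:ℝ) < δ'))
    filter_upwards [h2] with n hn
    have hpos : (0 : ℝ) < (Fseq n).card := by
      exact_mod_cast Finset.card_pos.mpr (hne n)
    rw [div_lt_iff₀ hpos] at hn
    exact hn
  obtain ⟨n, hn⟩ := hev.exists
  refine ⟨Fseq n, hne n, ?_⟩
  have hsub : (K * Fseq n) \ Fseq n ⊆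
      K.biUnion (fun g => ((Fseq n).image (fun t => g * t)) \ Fseq n) := by
    intro x hx
    rw [Finset.mem_sdiff, Finset.mem_mul] at hx
    obtain ⟨⟨g, hg, f, hf, rfl⟩, hnot⟩ := hx
    refine Finset.mem_biUnion.mpr ⟨g, hg, ?_⟩
    rw [Finset.mem_sdiff]
    exact ⟨Finset.mem_image_of_mem _ hf, hnot⟩
  have hcard1 : ((K * Fseq n) \ Fseq n).card ≤
      ∑ g ∈ K, (((Fseq n).image (fun t => g * t)) \ Fseq n).card :=
    le_trans (Finset.card_le_card hsub) (Finset.card_biUnion_le)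
  have hcard2 : ∀ g ∈ K, ((((Fseq n).image (fun t => g * t)) \ Fseq n).card : ℝ) ≤
      δ' * (Fseq n).card := by
    intro g hg
    refine le_trans ?_ (hn g hg).le
    have hsub2 : ((Fseq n).image (fun t => g * t)) \ Fseq n ⊆
        ((Fseq n).image (fun t => g * t)) ∆ (Fseq n) := by
      intro x hx
      rw [Finset.mem_sdiff] at hx
      rw [Finset.mem_symmDiff]
      exact Or.inl ⟨hx.1, hx.2⟩
    exact_mod_cast Finset.card_le_card hsub2
  calc (((K * Fseq n) \ Fseq n).card : ℝ)
      ≤ ∑ g ∈ K, ((((Fseq n).image (fun t => g * t)) \ Fseq n).card : ℝ) := by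
        exact_mod_cast hcard1
    _ ≤ ∑ _g ∈ K, δ' * (Fseq n).card := Finset.sum_le_sum hcard2
    _ = K.card * (δ' * (Fseq n).card) := by rw [Finset.sum_const, nsmul_eq_mul]
    _ ≤ δ * (Fseq n).card := by
        have hFn : (0:ℝ) ≤ (Fseq n).card := by positivity
        have h1 : (K.card : ℝ) * δ' ≤ δ := by
          rw [hδ', ← mul_div_assoc, div_le_iff₀ (by positivity : (0:ℝ) < (K.card : ℝ) + 1)]
          nlinarith [hδ.le, (by positivity : (0:ℝ) ≤ (K.card : ℝ))]
        rw [← mul_assoc]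
        exact mul_le_mul_of_nonneg_right h1 hFn

end Finitary
namespace PMP

open scoped ENNReal Pointwise

variable {G : Type*} [Group G] {X : Type*} [MeasurableSpace X]
  {μ : MeasureTheory.Measure X}

set_option maxHeartbeats 1600000

/-- The main iteration: a castle of `ε`-trimmed towers with shapes among the `V j`,
covering all but `v m` of the space after `m` stages. -/
lemma iterate_lemma [Countable G] [HasCountableSeparatingOn X MeasurableSet Set.univ]
    (α : PMP G X μ) [IsProbabilityMeasure μ]
    (XF : Set X) (hXFm : MeasurableSet XF) (hXFc : μ XFᶜ = 0)
    (hXFfree : ∀ x ∈ XF, ∀ g : G, g ≠ 1 → α.act g x ≠ x)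
    (ε : ℝ) (hε0 : 0 < ε) (hε1 : ε < 1/2)
    (N : ℕ) (V : ℕ → Finset G) (hVne : ∀ k, (V k).Nonempty)
    (hVinv : ∀ j k, j < k → ((((V j)⁻¹ * V k) \ V k).card : ℝ) ≤ ε * ((V k).card : ℝ))
    (v : ℕ → ℝ) (hv0 : v 0 = 1) (hvs : ∀ m, v (m + 1) = (1 - ε) * v m + 8 * ε ^ 2) :
    ∀ m : ℕ, m ≤ N →
    ∃ (A : ℕ × ℕ × Finset G → Set X) (S : ℕ × ℕ × Finset G → Finset G),
      (∀ p, MeasurableSet (A p)) ∧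
      (∀ p, A p ≠ ∅ → N - m ≤ p.1 ∧ p.1 < N ∧ S p ⊆ V p.1 ∧
        (1 - ε) * ((V p.1).card : ℝ) ≤ ((S p).card : ℝ)) ∧
      (∀ p f q g, f ∈ S p → g ∈ S q → ¬(p = q ∧ f = g) →
        Disjoint (α.act f '' A p) (α.act g '' A q)) ∧
      μ (⋃ p, ⋃ f ∈ S p, α.act f '' A p)ᶜ ≤ ENNReal.ofReal (v m) := by
  classical
  have hv_nonneg : ∀ m, 0 ≤ v m := by
    intro m
    induction m with
    | zero => rw [hv0]; norm_num
    | succ m ih => rw [hvs]; nlinarith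
  intro m
  induction m with
  | zero =>
    intro _
    refine ⟨fun _ => ∅, fun p => V p.1, fun _ => MeasurableSet.empty,
      fun p hp => absurd rfl hp, ?_, ?_⟩
    · intro p f q g _ _ _
      simp only [Set.image_empty]
      exact Set.empty_disjoint _
    · have : (⋃ p : ℕ × ℕ × Finset G, ⋃ f ∈ V p.1, α.act f '' (∅ : Set X)) = ∅ := by
        simp [Set.image_empty]
      rw [this, Set.compl_empty, hv0]
      simp
  | succ m ih =>
    intro hm
    obtain ⟨A, S, hAm, hAsupp, hAdisj, hAmeasure⟩ := ih (le_trans (Nat.le_succ m) hm)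
    set k : ℕ := N - (m + 1) with hk
    have hkm : k + 1 = N - m := by omega
    have hkN : k < N := by omega
    set U₀ : Set X := ⋃ p, ⋃ f ∈ S p, α.act f '' A p with hU₀def
    have hU₀m : MeasurableSet U₀ := by
      refine MeasurableSet.iUnion (fun p => MeasurableSet.biUnion
        (Finset.countable_toSet _) (fun f _ => α.measurableSet_image_act f (hAm p)))
    obtain ⟨A', S', h1', h2', h3', h4', h5', h6'⟩ :=
      α.stage_lemma XF hXFm hXFc hXFfree (V k) (hVne k) ε hε0 (by linarith) U₀ hU₀m
    -- combined castle
    set A'' : ℕ × ℕ × Finset G → Set X := fun p => if p.1 = k then A' p.2 else A p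
      with hA''
    set S'' : ℕ × ℕ × Finset G → Finset G := fun p => if p.1 = k then S' p.2 else S p
      with hS''
    have hA''m : ∀ p, MeasurableSet (A'' p) := by
      intro p
      by_cases hp : p.1 = k
      · rw [show A'' p = A' p.2 from if_pos hp]; exact h1' p.2
      · rw [show A'' p = A p from if_neg hp]; exact hAm p
    -- old parts never live on level k
    have hAknot : ∀ p : ℕ × ℕ × Finset G, p.1 = k → A p = ∅ := by
      intro p hp
      by_contra hne
      have := (hAsupp p hne).1
      omega
    have hsupp : ∀ p, A'' p ≠ ∅ → N - (m + 1) ≤ p.1 ∧ p.1 < N ∧ S'' p ⊆ V p.1 ∧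
        (1 - ε) * ((V p.1).card : ℝ) ≤ ((S'' p).card : ℝ) := by
      intro p hne
      by_cases hp : p.1 = k
      · have e1 : S'' p = S' p.2 := if_pos hp
        rw [e1, hp]
        exact ⟨by omega, hkN, h2' p.2, h3' p.2⟩
      · have e0 : A'' p = A p := if_neg hp
        have e1 : S'' p = S p := if_neg hp
        rw [e0] at hne
        obtain ⟨hs1, hs2, hs3, hs4⟩ := hAsupp p hne
        rw [e1]
        exact ⟨by omega, hs2, hs3, hs4⟩
    -- old parts sit inside U₀
    have holdsub : ∀ p f, f ∈ S p → α.act f '' A p ⊆ U₀ := by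
      intro p f hf
      rw [hU₀def]
      intro y hy
      exact Set.mem_iUnion.mpr ⟨p, Set.mem_biUnion hf hy⟩
    have hdisj'' : ∀ p f q g, f ∈ S'' p → g ∈ S'' q → ¬(p = q ∧ f = g) →
        Disjoint (α.act f '' A'' p) (α.act g '' A'' q) := by
      intro p f q g hfp hgq hne
      by_cases hp : p.1 = k <;> by_cases hq : q.1 = k
      · rw [show A'' p = A' p.2 from if_pos hp, show A'' q = A' q.2 from if_pos hq]
        rw [show S'' p = S' p.2 from if_pos hp] at hfp
        rw [show S'' q = S' q.2 from if_pos hq] at hgq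
        refine h5' p.2 f q.2 g hfp hgq ?_
        rintro ⟨h1, h2⟩
        refine hne ⟨?_, h2⟩
        have : p = (p.1, p.2) := rfl
        rw [this, hp, h1]
        rw [show q = (q.1, q.2) from rfl, hq]
      · rw [show A'' p = A' p.2 from if_pos hp, show A'' q = A q from if_neg hq]
        rw [show S'' p = S' p.2 from if_pos hp] at hfp
        rw [show S'' q = S q from if_neg hq] at hgq
        exact (h4' p.2 f hfp).mono_right (holdsub q g hgq)
      · rw [show A'' p = A p from if_neg hp, show A'' q = A' q.2 from if_pos hq]
        rw [show S'' p = S p from if_neg hp] at hfp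
        rw [show S'' q = S' q.2 from if_pos hq] at hgq
        exact ((h4' q.2 g hgq).mono_right (holdsub p f hfp)).symm
      · rw [show A'' p = A p from if_neg hp, show A'' q = A q from if_neg hq]
        rw [show S'' p = S p from if_neg hp] at hfp
        rw [show S'' q = S q from if_neg hq] at hgq
        exact hAdisj p f q g hfp hgq hne
    refine ⟨A'', S'', hA''m, hsupp, hdisj'', ?_⟩
    -- the measure estimate
    set stageparts : Set X := ⋃ i, ⋃ f ∈ S' i, α.act f '' A' i with hsp
    have hspm : MeasurableSet stageparts :=
      MeasurableSet.iUnion (fun i => MeasurableSet.biUnion (Finset.countable_toSet _)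
        (fun f _ => α.measurableSet_image_act f (h1' i)))
    set U₁ : Set X := ⋃ p, ⋃ f ∈ S'' p, α.act f '' A'' p with hU₁def
    have hU₁m : MeasurableSet U₁ :=
      MeasurableSet.iUnion (fun p => MeasurableSet.biUnion (Finset.countable_toSet _)
        (fun f _ => α.measurableSet_image_act f (hA''m p)))
    have hU₁eq : U₁ = U₀ ∪ stageparts := by
      apply Set.Subset.antisymm
      · refine Set.iUnion_subset (fun p => Set.iUnion₂_subset (fun f hf => ?_))
        by_cases hp : p.1 = k
        · rw [show A'' p = A' p.2 from if_pos hp]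
          rw [show S'' p = S' p.2 from if_pos hp] at hf
          refine Set.subset_union_of_subset_right ?_ _
          intro y hy
          exact Set.mem_iUnion.mpr ⟨p.2, Set.mem_biUnion hf hy⟩
        · rw [show A'' p = A p from if_neg hp]
          rw [show S'' p = S p from if_neg hp] at hf
          exact Set.subset_union_of_subset_left (holdsub p f hf) _
      · refine Set.union_subset ?_ ?_
        · refine Set.iUnion_subset (fun p => Set.iUnion₂_subset (fun f hf => ?_))
          by_cases hp : p.1 = k
          · rw [hAknot p hp, Set.image_empty]
            exact Set.empty_subset _
          · intro y hy
            have hfS : f ∈ S'' p := by rw [show S'' p = S p from if_neg hp]; exact hf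
            have hyA : y ∈ α.act f '' A'' p := by
              rw [show A'' p = A p from if_neg hp]; exact hy
            exact Set.mem_iUnion.mpr ⟨p, Set.mem_biUnion hfS hyA⟩
        · refine Set.iUnion_subset (fun i => Set.iUnion₂_subset (fun f hf => ?_))
          intro y hy
          have hfS : f ∈ S'' (k, i) := by
            rw [show S'' (k, i) = S' i from if_pos rfl]; exact hf
          have hyA : y ∈ α.act f '' A'' (k, i) := by
            rw [show A'' (k, i) = A' i from if_pos rfl]; exact hy
          exact Set.mem_iUnion.mpr ⟨(k, i), Set.mem_biUnion hfS hyA⟩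
    set Npart : Set X := U₁ \ U₀ with hNp
    have hNpm : MeasurableSet Npart := hU₁m.diff hU₀m
    have hU₀U₁ : U₀ ⊆ U₁ := by rw [hU₁eq]; exact Set.subset_union_left
    set Int : Set X := ⋂ f ∈ V k, (α.act f) ⁻¹' U₀ᶜ with hInt
    have hIntm : MeasurableSet Int := MeasurableSet.biInter (Finset.countable_toSet _)
      (fun f _ => (α.measurable_act f) hU₀m.compl)
    have hVk0 : ((V k).card : ℝ≥0∞) ≠ 0 := by
      simp only [ne_eq, Nat.cast_eq_zero]
      exact Finset.card_ne_zero_of_mem (hVne k).choose_spec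
    -- the gain estimate
    have hgain : ENNReal.ofReal ε * μ Int ≤ μ Npart := by
      have hcount : ∀ᵐ x ∂μ, x ∈ Int →
          ENNReal.ofReal (ε * ((V k).card : ℝ)) ≤
            ∑ f ∈ V k, Set.indicator ((α.act f) ⁻¹' Npart) (fun _ => (1 : ℝ≥0∞)) x := by
        filter_upwards [h6'] with x hx hxInt
        have hxInt' : ∀ f ∈ V k, α.act f x ∉ U₀ := by
          intro f hf
          have := Set.mem_iInter₂.mp hxInt f hf
          exact this
        have hsubf : (V k).filter (fun f => α.act f x ∈ U₀ ∪ stageparts) ⊆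
            (V k).filter (fun f => α.act f x ∈ Npart) := by
          intro f hf
          rw [Finset.mem_filter] at hf ⊢
          refine ⟨hf.1, ?_⟩
          have hmem1 : α.act f x ∈ U₁ \ U₀ :=
            ⟨by rw [hU₁eq]; exact hf.2, hxInt' f hf.1⟩
          rwa [← hNp] at hmem1
        have hsum : ∑ f ∈ V k, Set.indicator ((α.act f) ⁻¹' Npart) (fun _ => (1 : ℝ≥0∞)) x
            = (((V k).filter (fun f => α.act f x ∈ Npart)).card : ℝ≥0∞) := by
          rw [Finset.card_filter]
          push_cast
          refine Finset.sum_congr rfl (fun f _ => ?_)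
          by_cases hfx : α.act f x ∈ Npart
          · simp [Set.indicator_apply, Set.mem_preimage, hfx]
          · simp [Set.indicator_apply, Set.mem_preimage, hfx]
        rw [hsum]
        calc ENNReal.ofReal (ε * ((V k).card : ℝ))
            ≤ ENNReal.ofReal ((((V k).filter (fun f => α.act f x ∈ Npart)).card : ℝ)) := by
              refine ENNReal.ofReal_le_ofReal (le_trans hx.le ?_)
              exact_mod_cast Finset.card_le_card hsubf
          _ = (((V k).filter (fun f => α.act f x ∈ Npart)).card : ℝ≥0∞) :=
              ENNReal.ofReal_natCast _
      have hle1 : ENNReal.ofReal (ε * ((V k).card : ℝ)) * μ Int ≤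
          ((V k).card : ℝ≥0∞) * μ Npart := by
        have hI1 : ENNReal.ofReal (ε * ((V k).card : ℝ)) * μ Int =
            ∫⁻ _ in Int, ENNReal.ofReal (ε * ((V k).card : ℝ)) ∂μ := by
          rw [MeasureTheory.setLIntegral_const]
        have hI2 : (∫⁻ _ in Int, ENNReal.ofReal (ε * ((V k).card : ℝ)) ∂μ) ≤
            ∫⁻ x in Int,
              (∑ f ∈ V k, Set.indicator ((α.act f) ⁻¹' Npart) (fun _ => (1 : ℝ≥0∞)) x) ∂μ := by
          refine MeasureTheory.lintegral_mono_ae ?_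
          rw [MeasureTheory.ae_restrict_iff' hIntm]
          filter_upwards [hcount] with x hx hxInt
          exact hx hxInt
        have hI3 : (∫⁻ x in Int,
              (∑ f ∈ V k, Set.indicator ((α.act f) ⁻¹' Npart) (fun _ => (1 : ℝ≥0∞)) x) ∂μ) ≤
            ∫⁻ x, (∑ f ∈ V k, Set.indicator ((α.act f) ⁻¹' Npart) (fun _ => (1 : ℝ≥0∞)) x) ∂μ :=
          MeasureTheory.setLIntegral_le_lintegral _ _
        have hI4 : (∫⁻ x, (∑ f ∈ V k,
              Set.indicator ((α.act f) ⁻¹' Npart) (fun _ => (1 : ℝ≥0∞)) x) ∂μ) =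
            ∑ f ∈ V k, μ ((α.act f) ⁻¹' Npart) := by
          rw [MeasureTheory.lintegral_finset_sum']
          · refine Finset.sum_congr rfl (fun f _ => ?_)
            exact MeasureTheory.lintegral_indicator_one ((α.measurable_act f) hNpm)
          · intro f _
            exact (Measurable.indicator measurable_const ((α.measurable_act f) hNpm)).aemeasurable
        have hI5 : (∑ f ∈ V k, μ ((α.act f) ⁻¹' Npart)) = ((V k).card : ℝ≥0∞) * μ Npart := by
          rw [Finset.sum_congr rfl
            (fun f _ => (α.preserves f).measure_preimage hNpm.nullMeasurableSet),
            Finset.sum_const, nsmul_eq_mul]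
        rw [hI1, ← hI5, ← hI4]
        exact le_trans hI2 hI3
      have hre : ENNReal.ofReal (ε * ((V k).card : ℝ)) =
          ((V k).card : ℝ≥0∞) * ENNReal.ofReal ε := by
        rw [mul_comm ε, ENNReal.ofReal_mul (by positivity), ENNReal.ofReal_natCast]
      rw [hre, mul_assoc] at hle1
      exact (ENNReal.mul_le_mul_iff_right hVk0 (by simp)).mp hle1
    -- the interior estimate
    have hbadsub : U₀ᶜ \ Int ⊆ ⋃ p, ⋃ h ∈ (((V k)⁻¹ * S p) \ S p), α.act h '' A p := by
      rintro x ⟨hxU, hxI⟩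
      have hex : ∃ f ∈ V k, α.act f x ∈ U₀ := by
        by_contra hcon
        push_neg at hcon
        exact hxI (Set.mem_iInter₂.mpr (fun f hf => hcon f hf))
      obtain ⟨f, hf, hfU⟩ := hex
      obtain ⟨p, hp⟩ := Set.mem_iUnion.mp hfU
      obtain ⟨g, hg, hmem⟩ := Set.mem_iUnion₂.mp hp
      rw [α.act_mem_image_act_iff] at hmem
      have hhmem : f⁻¹ * g ∈ (((V k)⁻¹ * S p) \ S p) := by
        rw [Finset.mem_sdiff]
        exact ⟨Finset.mul_mem_mul (Finset.inv_mem_inv hf) hg,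
          fun hmemS => hxU (holdsub p _ hmemS hmem)⟩
      exact Set.mem_iUnion.mpr ⟨p, Set.mem_iUnion₂.mpr ⟨f⁻¹ * g, hhmem, hmem⟩⟩
    have hsum_cover : (∑' p : ℕ × ℕ × Finset G, ((S p).card : ℝ≥0∞) * μ (A p)) ≤ 1 := by
      have hBdisj : Pairwise (Function.onFun Disjoint
          (fun p : ℕ × ℕ × Finset G => ⋃ f ∈ S p, α.act f '' A p)) := by
        intro p q hpq
        rw [Function.onFun, Set.disjoint_left]
        intro x hx1 hx2
        obtain ⟨f, hf, hxf⟩ := Set.mem_iUnion₂.mp hx1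
        obtain ⟨g, hg, hxg⟩ := Set.mem_iUnion₂.mp hx2
        exact Set.disjoint_left.mp (hAdisj p f q g hf hg (fun h => hpq h.1)) hxf hxg
      have hBmeas : ∀ p : ℕ × ℕ × Finset G, MeasurableSet (⋃ f ∈ S p, α.act f '' A p) :=
        fun p => MeasurableSet.biUnion (Finset.countable_toSet _)
          (fun f _ => α.measurableSet_image_act f (hAm p))
      have h1 : μ U₀ = ∑' p, μ (⋃ f ∈ S p, α.act f '' A p) :=
        MeasureTheory.measure_iUnion hBdisj hBmeas
      have h2 : ∀ p, μ (⋃ f ∈ S p, α.act f '' A p) = ((S p).card : ℝ≥0∞) * μ (A p) := by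
        intro p
        rw [measure_biUnion_finset ?_ (fun f _ => α.measurableSet_image_act f (hAm p))]
        · rw [Finset.sum_congr rfl (fun f _ => α.measure_image_act f (hAm p)),
            Finset.sum_const, nsmul_eq_mul]
        · intro f hf g hg hfg
          rw [Function.onFun]
          exact hAdisj p f p g hf hg (fun h => hfg h.2)
      calc (∑' p : ℕ × ℕ × Finset G, ((S p).card : ℝ≥0∞) * μ (A p))
          = ∑' p, μ (⋃ f ∈ S p, α.act f '' A p) := by
            exact (tsum_congr (fun p => (h2 p))).symm
        _ = μ U₀ := h1.symm
        _ ≤ 1 := MeasureTheory.prob_le_one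
    have hcoeff : ∀ p : ℕ × ℕ × Finset G,
        (((((V k)⁻¹ * S p) \ S p).card : ℝ≥0∞)) * μ (A p) ≤
        ENNReal.ofReal (4 * ε) * (((S p).card : ℝ≥0∞) * μ (A p)) := by
      intro p
      by_cases hApe : A p = ∅
      · rw [hApe]
        simp
      · obtain ⟨hs1, hs2, hs3, hs4⟩ := hAsupp p hApe
        have hklt : k < p.1 := by omega
        have hVj : (0 : ℝ) ≤ ((V p.1).card : ℝ) := by positivity
        have hsplit : (((V k)⁻¹ * S p) \ S p) ⊆
            ((((V k)⁻¹ * V p.1) \ V p.1) ∪ (V p.1 \ S p)) := by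
          intro x hx
          rw [Finset.mem_sdiff] at hx
          rw [Finset.mem_union, Finset.mem_sdiff, Finset.mem_sdiff]
          by_cases hxV : x ∈ V p.1
          · exact Or.inr ⟨hxV, hx.2⟩
          · exact Or.inl ⟨Finset.mul_subset_mul_left hs3 hx.1, hxV⟩
        have hcard1 : ((((V k)⁻¹ * S p) \ S p).card : ℝ) ≤ 4 * ε * ((S p).card : ℝ) := by
          have ha : ((((V k)⁻¹ * S p) \ S p).card : ℝ) ≤
              (((((V k)⁻¹ * V p.1) \ V p.1)).card : ℝ) + ((V p.1 \ S p).card : ℝ) := by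
            have := Finset.card_le_card hsplit
            have h2 := Finset.card_union_le ((((V k)⁻¹ * V p.1) \ V p.1)) (V p.1 \ S p)
            exact_mod_cast le_trans this h2
          have hb : (((((V k)⁻¹ * V p.1) \ V p.1)).card : ℝ) ≤ ε * ((V p.1).card : ℝ) :=
            hVinv k p.1 hklt
          have hc : ((V p.1 \ S p).card : ℝ) ≤ ε * ((V p.1).card : ℝ) := by
            rw [Finset.card_sdiff_of_subset hs3]
            have hle := Finset.card_le_card hs3
            push_cast [Nat.cast_sub hle]
            linarith
          have hd : ((V p.1).card : ℝ) ≤ 2 * ((S p).card : ℝ) := by nlinarith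
          nlinarith
        calc (((((V k)⁻¹ * S p) \ S p).card : ℝ≥0∞)) * μ (A p)
            ≤ (ENNReal.ofReal (4 * ε * ((S p).card : ℝ))) * μ (A p) := by
              refine mul_le_mul_left ?_ _
              rw [← ENNReal.ofReal_natCast]
              exact ENNReal.ofReal_le_ofReal hcard1
          _ = ENNReal.ofReal (4 * ε) * (((S p).card : ℝ≥0∞) * μ (A p)) := by
              rw [ENNReal.ofReal_mul (by positivity), ENNReal.ofReal_natCast, mul_assoc]
    have hIntlow : μ (U₀ᶜ \ Int) ≤ ENNReal.ofReal (4 * ε) := by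
      calc μ (U₀ᶜ \ Int)
          ≤ μ (⋃ p, ⋃ h ∈ (((V k)⁻¹ * S p) \ S p), α.act h '' A p) := measure_mono hbadsub
        _ ≤ ∑' p : ℕ × ℕ × Finset G, μ (⋃ h ∈ (((V k)⁻¹ * S p) \ S p), α.act h '' A p) :=
            MeasureTheory.measure_iUnion_le _
        _ ≤ ∑' p : ℕ × ℕ × Finset G, (((((V k)⁻¹ * S p) \ S p).card : ℝ≥0∞)) * μ (A p) := by
            refine ENNReal.tsum_le_tsum (fun p => ?_)
            refine le_trans (MeasureTheory.measure_biUnion_finset_le _ _) ?_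
            rw [Finset.sum_congr rfl (fun h _ => α.measure_image_act h (hAm p)),
              Finset.sum_const, nsmul_eq_mul]
        _ ≤ ∑' p : ℕ × ℕ × Finset G,
              ENNReal.ofReal (4 * ε) * (((S p).card : ℝ≥0∞) * μ (A p)) :=
            ENNReal.tsum_le_tsum hcoeff
        _ = ENNReal.ofReal (4 * ε) * ∑' p : ℕ × ℕ × Finset G,
              (((S p).card : ℝ≥0∞) * μ (A p)) := ENNReal.tsum_mul_left
        _ ≤ ENNReal.ofReal (4 * ε) * 1 := mul_le_mul_right hsum_cover _
        _ = ENNReal.ofReal (4 * ε) := mul_one _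
    -- combine
    have hU₁c : U₁ᶜ = U₀ᶜ \ Npart := by
      rw [hNp]
      ext x
      simp only [Set.mem_compl_iff, Set.mem_diff, not_and, not_not]
      constructor
      · intro hx
        exact ⟨fun hxU => hx (hU₀U₁ hxU), fun hxU₁ => absurd hxU₁ hx⟩
      · rintro ⟨h1, h2⟩
        intro hxU₁
        exact h1 (h2 hxU₁)
    have hNpU₀c : Npart ⊆ U₀ᶜ := fun x hx => hx.2
    have hdiffμ : μ U₁ᶜ = μ U₀ᶜ - μ Npart := by
      rw [hU₁c]
      exact MeasureTheory.measure_diff hNpU₀c hNpm.nullMeasurableSet (measure_ne_top μ _)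
    have hra : (μ U₀ᶜ).toReal ≤ v m :=
      ENNReal.toReal_le_of_le_ofReal (hv_nonneg m) hAmeasure
    have hrn : ε * (μ Int).toReal ≤ (μ Npart).toReal := by
      have h := ENNReal.toReal_mono (measure_ne_top μ _) hgain
      rwa [ENNReal.toReal_mul, ENNReal.toReal_ofReal hε0.le] at h
    have hri : (μ U₀ᶜ).toReal ≤ (μ Int).toReal + 4 * ε := by
      have h0 : μ U₀ᶜ ≤ μ Int + μ (U₀ᶜ \ Int) := by
        refine le_trans (measure_mono ?_) (MeasureTheory.measure_union_le _ _)
        intro x hx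
        by_cases hxI : x ∈ Int
        · exact Set.mem_union_left _ hxI
        · exact Set.mem_union_right _ ⟨hx, hxI⟩
      have h1 : μ U₀ᶜ ≤ μ Int + ENNReal.ofReal (4 * ε) :=
        le_trans h0 (add_le_add_right hIntlow _)
      have h2 := ENNReal.toReal_mono
        (by exact ENNReal.add_ne_top.mpr ⟨measure_ne_top μ _, ENNReal.ofReal_ne_top⟩) h1
      rwa [ENNReal.toReal_add (measure_ne_top μ _) ENNReal.ofReal_ne_top,
        ENNReal.toReal_ofReal (by positivity)] at h2
    have hnle : μ Npart ≤ μ U₀ᶜ := measure_mono hNpU₀c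
    have hfinal_real : (μ U₁ᶜ).toReal ≤ v (m + 1) := by
      rw [hdiffμ, ENNReal.toReal_sub_of_le hnle (measure_ne_top μ _), hvs]
      have hri0 : (0:ℝ) ≤ (μ Int).toReal := ENNReal.toReal_nonneg
      nlinarith [mul_nonneg (by linarith : (0:ℝ) ≤ 1 - ε)
          (by linarith : (0:ℝ) ≤ v m - (μ U₀ᶜ).toReal),
        mul_nonneg hε0.le (by linarith : (0:ℝ) ≤ (μ Int).toReal - ((μ U₀ᶜ).toReal - 4 * ε))]
    calc μ U₁ᶜ = ENNReal.ofReal ((μ U₁ᶜ).toReal) :=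
        (ENNReal.ofReal_toReal (measure_ne_top μ _)).symm
      _ ≤ ENNReal.ofReal (v (m + 1)) := ENNReal.ofReal_le_ofReal hfinal_real


end PMP
section Main

open scoped ENNReal Pointwise

set_option maxHeartbeats 1600000

theorem rohlin_lemma_for_tiles'
    {G : Type*} [Group G] [Countable G]
    (hamen : ∃ Fseq : ℕ → Finset G, IsFolnerSeq Fseq)
    (T : Finset G) (hT : IsTile T)
    {X : Type*} [MeasurableSpace X] [StandardBorelSpace X]
    (μ : MeasureTheory.Measure X) [MeasureTheory.IsProbabilityMeasure μ]
    (α : PMP G X μ) (hα : α.EssFree)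
    (ε : ℝ) (hε : 0 < ε) :
    ∃ B : Set X, MeasurableSet B ∧
      ((T : Set G).Pairwise fun s t => Disjoint (α.act s '' B) (α.act t '' B)) ∧
      μ (⋃ t ∈ T, α.act t '' B) > 1 - ENNReal.ofReal ε := by
  classical
  obtain ⟨Fseq, hFol⟩ := hamen
  obtain ⟨C, hCdisj, hCcover⟩ := hT
  have hsep : HasCountableSeparatingOn X MeasurableSet Set.univ := inferInstance
  obtain ⟨XF, hXFm, hXFc, hXFfree⟩ := α.exists_free_conull hα
  -- T is nonempty
  have hTne : T.Nonempty := by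
    have : (1 : G) ∈ (⋃ c ∈ C, (fun t => t * c) '' (T : Set G)) := by
      rw [hCcover]; trivial
    obtain ⟨c, _, t, ht, _⟩ := Set.mem_iUnion₂.mp this
    exact ⟨t, ht⟩
  have hT1 : (1 : ℝ) ≤ (T.card : ℝ) := by
    exact_mod_cast Finset.card_pos.mpr hTne
  -- parameters
  set ε' : ℝ := min ε 1 with hε'def
  have hε'0 : 0 < ε' := lt_min hε one_pos
  have hε'1 : ε' ≤ 1 := min_le_right _ _
  set εs : ℝ := ε' / (100 * ((T.card : ℝ) + 1)) with hεsdef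
  have hεs0 : 0 < εs := by positivity
  have hεsle : εs ≤ ε' / 200 := by
    rw [hεsdef]
    exact div_le_div_of_nonneg_left hε'0.le (by norm_num) (by nlinarith)
  have hεs12 : εs < 1 / 2 := by
    have h1 : ε' / 200 ≤ 1 / 200 := by linarith
    linarith
  -- choose the shape sequence
  have hselraw : ∀ K : Finset G, ∃ Fk : Finset G, Fk.Nonempty ∧
      (((K * Fk) \ Fk).card : ℝ) ≤ εs * Fk.card :=
    fun K => folner_choose Fseq hFol K εs hεs0
  choose sel hsel1 hsel2 using hselraw
  set Kseq : ℕ → Finset G := fun k => Nat.rec (T * T⁻¹) (fun _ Kk => Kk ∪ (sel Kk)⁻¹) k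
    with hKseq
  set V : ℕ → Finset G := fun k => sel (Kseq k) with hV
  have hKmono : ∀ j k, j ≤ k → Kseq j ⊆ Kseq k := by
    intro j k hjk
    induction k with
    | zero => rw [Nat.le_zero.mp hjk]
    | succ k ih =>
      rcases Nat.lt_or_ge j (k + 1) with h | h
      · exact le_trans (ih (by omega)) Finset.subset_union_left
      · rw [Nat.le_antisymm hjk h]
  have hVne : ∀ k, (V k).Nonempty := fun k => hsel1 (Kseq k)
  have hVinv : ∀ j k, j < k → ((((V j)⁻¹ * V k) \ V k).card : ℝ) ≤ εs * ((V k).card : ℝ) := by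
    intro j k hjk
    have hsub : (V j)⁻¹ ⊆ Kseq k := by
      have h1 : (V j)⁻¹ ⊆ Kseq (j + 1) := by
        rw [hV]
        exact Finset.subset_union_right
      exact le_trans h1 (hKmono (j + 1) k hjk)
    have hsub2 : (((V j)⁻¹ * V k) \ V k) ⊆ ((Kseq k * V k) \ V k) := by
      exact Finset.sdiff_subset_sdiff (Finset.mul_subset_mul_right hsub) subset_rfl
    exact le_trans (by exact_mod_cast Finset.card_le_card hsub2) (hsel2 (Kseq k))
  have hVT : ∀ k, ((((T * T⁻¹) * V k) \ V k).card : ℝ) ≤ εs * ((V k).card : ℝ) := by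
    intro k
    have hsub : (T * T⁻¹ : Finset G) ⊆ Kseq k := hKmono 0 k (Nat.zero_le k)
    have hsub2 : (((T * T⁻¹) * V k) \ V k) ⊆ ((Kseq k * V k) \ V k) :=
      Finset.sdiff_subset_sdiff (Finset.mul_subset_mul_right hsub) subset_rfl
    exact le_trans (by exact_mod_cast Finset.card_le_card hsub2) (hsel2 (Kseq k))
  -- the bound sequence
  set v : ℕ → ℝ := fun m => Nat.rec 1 (fun _ x => (1 - εs) * x + 8 * εs ^ 2) m with hv
  have hv0 : v 0 = 1 := rfl
  have hvs : ∀ m, v (m + 1) = (1 - εs) * v m + 8 * εs ^ 2 := fun m => rfl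
  have hvle : ∀ m, v m ≤ (1 - εs) ^ m + 8 * εs := by
    intro m
    induction m with
    | zero => rw [hv0, pow_zero]; nlinarith
    | succ m ih =>
      rw [hvs]
      have h1 : 0 ≤ 1 - εs := by nlinarith
      nlinarith [mul_le_mul_of_nonneg_left ih h1, pow_succ (1 - εs) m]
  -- choose the number of stages
  obtain ⟨N, hN⟩ := exists_pow_lt_of_lt_one hεs0 (by nlinarith : (1:ℝ) - εs < 1)
  have hvN : v N ≤ 9 * εs := le_trans (hvle N) (by nlinarith)
  -- run the iteration
  obtain ⟨A, S, hAm, hAsupp, hAdisj, hAmeas⟩ :=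
    α.iterate_lemma XF hXFm hXFc hXFfree εs hεs0 hεs12 N V hVne hVinv v hv0 hvs N le_rfl
  -- tile each shape
  have htile : ∀ p : ℕ × ℕ × Finset G, ∃ Cs : Finset G, (↑Cs : Set G) ⊆ C ∧
      (∀ c ∈ Cs, ∀ t ∈ T, t * c ∈ S p) ∧
      (S p).card ≤ T.card * (Cs.card + (((T * T⁻¹ * S p) \ S p)).card) :=
    fun p => tile_count T C hCdisj hCcover (S p)
  choose Cs hCs1 hCs2 hCs3 using htile
  set B : Set X := ⋃ p, ⋃ c ∈ Cs p, α.act c '' A p with hB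
  have hBm : MeasurableSet B :=
    MeasurableSet.iUnion (fun p => MeasurableSet.biUnion (Finset.countable_toSet _)
      (fun c _ => α.measurableSet_image_act c (hAm p)))
  refine ⟨B, hBm, ?_, ?_⟩
  · -- pairwise disjointness
    intro s hs t ht hst
    rw [Set.disjoint_left]
    intro x hxs hxt
    rw [hB, Set.image_iUnion] at hxs hxt
    obtain ⟨p, hxp⟩ := Set.mem_iUnion.mp hxs
    obtain ⟨q, hxq⟩ := Set.mem_iUnion.mp hxt
    rw [Set.image_iUnion₂] at hxp hxq
    obtain ⟨c, hc, hxc⟩ := Set.mem_iUnion₂.mp hxp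
    obtain ⟨c', hc', hxc'⟩ := Set.mem_iUnion₂.mp hxq
    rw [α.image_act_image_act] at hxc hxc'
    have hmem1 : s * c ∈ S p := hCs2 p c hc s hs
    have hmem2 : t * c' ∈ S q := hCs2 q c' hc' t ht
    by_cases hpq : p = q ∧ s * c = t * c'
    · obtain ⟨hpq1, hpq2⟩ := hpq
      have := tile_unique T C hCdisj (hCs1 p hc) (hCs1 q hc') hs ht hpq2
      exact hst this.2
    · exact Set.disjoint_left.mp (hAdisj p (s * c) q (t * c') hmem1 hmem2 hpq) hxc hxc'
  · -- the measure bound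
    set U : Set X := ⋃ p, ⋃ f ∈ S p, α.act f '' A p with hU
    have hUm : MeasurableSet U :=
      MeasurableSet.iUnion (fun p => MeasurableSet.biUnion (Finset.countable_toSet _)
        (fun f _ => α.measurableSet_image_act f (hAm p)))
    have hTB : (⋃ t ∈ T, α.act t '' B) =
        ⋃ p, ⋃ g ∈ (T * Cs p : Finset G), α.act g '' A p := by
      apply Set.Subset.antisymm
      · refine Set.iUnion₂_subset (fun t ht => ?_)
        rw [hB, Set.image_iUnion]
        refine Set.iUnion_subset (fun p => ?_)
        rw [Set.image_iUnion₂]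
        refine Set.iUnion₂_subset (fun c hc => ?_)
        rw [α.image_act_image_act]
        intro y hy
        exact Set.mem_iUnion.mpr ⟨p, Set.mem_iUnion₂.mpr ⟨t * c, Finset.mul_mem_mul ht hc, hy⟩⟩
      · refine Set.iUnion_subset (fun p => Set.iUnion₂_subset (fun g hg => ?_))
        rw [Finset.mem_mul] at hg
        obtain ⟨t, ht, c, hc, rfl⟩ := hg
        intro y hy
        rw [← α.image_act_image_act] at hy
        refine Set.mem_iUnion₂.mpr ⟨t, ht, ?_⟩
        refine Set.image_mono ?_ hy
        intro z hz
        exact Set.mem_iUnion.mpr ⟨p, Set.mem_iUnion₂.mpr ⟨c, hc, hz⟩⟩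
    have hTCs_sub : ∀ p : ℕ × ℕ × Finset G, (T * Cs p : Finset G) ⊆ S p := by
      intro p g hg
      rw [Finset.mem_mul] at hg
      obtain ⟨t, ht, c, hc, rfl⟩ := hg
      exact hCs2 p c hc t ht
    have hTBμ : μ (⋃ t ∈ T, α.act t '' B) =
        ∑' p : ℕ × ℕ × Finset G, (((T * Cs p : Finset G).card : ℝ≥0∞)) * μ (A p) := by
      rw [hTB]
      have hYdisj : Pairwise (Function.onFun Disjoint
          (fun p : ℕ × ℕ × Finset G => ⋃ g ∈ (T * Cs p : Finset G), α.act g '' A p)) := by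
        intro p q hpq
        rw [Function.onFun, Set.disjoint_left]
        intro x hx1 hx2
        obtain ⟨g, hg, hxg⟩ := Set.mem_iUnion₂.mp hx1
        obtain ⟨g', hg', hxg'⟩ := Set.mem_iUnion₂.mp hx2
        exact Set.disjoint_left.mp (hAdisj p g q g' (hTCs_sub p hg) (hTCs_sub q hg')
          (fun h => hpq h.1)) hxg hxg'
      have hYmeas : ∀ p : ℕ × ℕ × Finset G,
          MeasurableSet (⋃ g ∈ (T * Cs p : Finset G), α.act g '' A p) :=
        fun p => MeasurableSet.biUnion (Finset.countable_toSet _)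
          (fun g _ => α.measurableSet_image_act g (hAm p))
      rw [MeasureTheory.measure_iUnion hYdisj hYmeas]
      refine tsum_congr (fun p => ?_)
      rw [measure_biUnion_finset ?_ (fun g _ => α.measurableSet_image_act g (hAm p))]
      · rw [Finset.sum_congr rfl (fun g _ => α.measure_image_act g (hAm p)),
          Finset.sum_const, nsmul_eq_mul]
      · intro g hg g' hg' hgg
        rw [Function.onFun]
        exact hAdisj p g p g' (hTCs_sub p hg) (hTCs_sub p hg') (fun h => hgg h.2)
    have hUμ : μ U = ∑' p : ℕ × ℕ × Finset G, (((S p).card : ℝ≥0∞)) * μ (A p) := by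
      have hYdisj : Pairwise (Function.onFun Disjoint
          (fun p : ℕ × ℕ × Finset G => ⋃ f ∈ S p, α.act f '' A p)) := by
        intro p q hpq
        rw [Function.onFun, Set.disjoint_left]
        intro x hx1 hx2
        obtain ⟨g, hg, hxg⟩ := Set.mem_iUnion₂.mp hx1
        obtain ⟨g', hg', hxg'⟩ := Set.mem_iUnion₂.mp hx2
        exact Set.disjoint_left.mp (hAdisj p g q g' hg hg' (fun h => hpq h.1)) hxg hxg'
      have hYmeas : ∀ p : ℕ × ℕ × Finset G,
          MeasurableSet (⋃ f ∈ S p, α.act f '' A p) :=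
        fun p => MeasurableSet.biUnion (Finset.countable_toSet _)
          (fun f _ => α.measurableSet_image_act f (hAm p))
      rw [hU, MeasureTheory.measure_iUnion hYdisj hYmeas]
      refine tsum_congr (fun p => ?_)
      rw [measure_biUnion_finset ?_ (fun f _ => α.measurableSet_image_act f (hAm p))]
      · rw [Finset.sum_congr rfl (fun f _ => α.measure_image_act f (hAm p)),
          Finset.sum_const, nsmul_eq_mul]
      · intro f hf g hg hfg
        rw [Function.onFun]
        exact hAdisj p f p g hf hg (fun h => hfg h.2)
    set κ : ℝ := 1 - 4 * εs * (T.card : ℝ) with hκdef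
    have hkey : εs * ((T.card : ℝ) + 1) = ε' / 100 := by
      rw [hεsdef]
      field_simp
    have hTb : εs * (T.card : ℝ) ≤ ε' / 100 := by nlinarith [hεs0.le]
    have hεs200 : εs ≤ 1 / 200 := le_trans hεsle (by linarith)
    have hκ0 : 0 < κ := by
      rw [hκdef]
      nlinarith
    have hκ1 : κ ≤ 1 := by
      rw [hκdef]
      nlinarith [hεs0.le, hT1]
    have hcoeff : ∀ p : ℕ × ℕ × Finset G,
        ENNReal.ofReal κ * ((((S p).card : ℝ≥0∞)) * μ (A p)) ≤
          (((T * Cs p : Finset G).card : ℝ≥0∞)) * μ (A p) := by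
      intro p
      by_cases hApe : A p = ∅
      · rw [hApe]
        simp
      · obtain ⟨hs1, hs2, hs3, hs4⟩ := hAsupp p hApe
        have hTCscard : ((T * Cs p : Finset G).card : ℝ) =
            (T.card : ℝ) * (((Cs p).card : ℝ)) := by
          have hinj : Set.InjOn (fun q : G × G => q.1 * q.2)
              ((T : Set G) ×ˢ ((Cs p : Set G))) := by
            rintro ⟨t, c⟩ htc ⟨t', c'⟩ htc' heq
            rw [Set.mem_prod] at htc htc'
            have := tile_unique T C hCdisj (hCs1 p htc.2) (hCs1 p htc'.2)
              (Finset.mem_coe.mp htc.1) (Finset.mem_coe.mp htc'.1) heq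
            rw [Prod.mk.injEq]
            exact ⟨this.2, this.1⟩
          have := Finset.card_mul_iff.mpr hinj
          exact_mod_cast this
        have hbad : (((T * T⁻¹ * S p) \ S p).card : ℝ) ≤ 4 * εs * ((S p).card : ℝ) := by
          have hsplit : ((T * T⁻¹ * S p) \ S p) ⊆
              (((T * T⁻¹ * V p.1) \ V p.1) ∪ (V p.1 \ S p)) := by
            intro x hx
            rw [Finset.mem_sdiff] at hx
            rw [Finset.mem_union, Finset.mem_sdiff, Finset.mem_sdiff]
            by_cases hxV : x ∈ V p.1
            · exact Or.inr ⟨hxV, hx.2⟩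
            · exact Or.inl ⟨Finset.mul_subset_mul_left hs3 hx.1, hxV⟩
          have ha : (((T * T⁻¹ * S p) \ S p).card : ℝ) ≤
              (((T * T⁻¹ * V p.1) \ V p.1).card : ℝ) + ((V p.1 \ S p).card : ℝ) := by
            have h1 := Finset.card_le_card hsplit
            have h2 := Finset.card_union_le ((T * T⁻¹ * V p.1) \ V p.1) (V p.1 \ S p)
            exact_mod_cast le_trans h1 h2
          have hb := hVT p.1
          have hc : ((V p.1 \ S p).card : ℝ) ≤ εs * ((V p.1).card : ℝ) := by
            rw [Finset.card_sdiff_of_subset hs3]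
            have hle := Finset.card_le_card hs3
            push_cast [Nat.cast_sub hle]
            linarith
          have hd : ((V p.1).card : ℝ) ≤ 2 * ((S p).card : ℝ) := by nlinarith
          nlinarith
        have hScount : ((S p).card : ℝ) ≤ (T.card : ℝ) *
            (((Cs p).card : ℝ) + (((T * T⁻¹ * S p) \ S p).card : ℝ)) := by
          exact_mod_cast hCs3 p
        have hmain : κ * ((S p).card : ℝ) ≤ ((T * Cs p : Finset G).card : ℝ) := by
          rw [hTCscard, hκdef]
          nlinarith [mul_le_mul_of_nonneg_left hbad (by linarith : (0:ℝ) ≤ (T.card : ℝ))]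
        calc ENNReal.ofReal κ * ((((S p).card : ℝ≥0∞)) * μ (A p))
            = ENNReal.ofReal (κ * ((S p).card : ℝ)) * μ (A p) := by
              rw [ENNReal.ofReal_mul hκ0.le, ENNReal.ofReal_natCast, mul_assoc]
          _ ≤ (((T * Cs p : Finset G).card : ℝ≥0∞)) * μ (A p) := by
              refine mul_le_mul_left ?_ _
              rw [← ENNReal.ofReal_natCast ((T * Cs p : Finset G).card)]
              exact ENNReal.ofReal_le_ofReal hmain
    have hUb : ENNReal.ofReal (1 - 9 * εs) ≤ μ U := by
      have h1 : μ Uᶜ ≤ ENNReal.ofReal (9 * εs) :=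
        le_trans hAmeas (ENNReal.ofReal_le_ofReal hvN)
      have h2 : ENNReal.ofReal (1 - 9 * εs) = 1 - ENNReal.ofReal (9 * εs) := by
        rw [ENNReal.ofReal_sub _ (by positivity), ENNReal.ofReal_one]
      have h3 : μ U = 1 - μ Uᶜ := by
        refine ENNReal.eq_sub_of_add_eq (measure_ne_top μ _) ?_
        exact (MeasureTheory.measure_add_measure_compl hUm).trans measure_univ
      rw [h2, h3]
      exact tsub_le_tsub_left h1 1
    have hfinal : ENNReal.ofReal (κ * (1 - 9 * εs)) ≤ μ (⋃ t ∈ T, α.act t '' B) := by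
      have h9 : (0:ℝ) ≤ 1 - 9 * εs := by linarith
      calc ENNReal.ofReal (κ * (1 - 9 * εs))
          = ENNReal.ofReal κ * ENNReal.ofReal (1 - 9 * εs) := ENNReal.ofReal_mul hκ0.le
        _ ≤ ENNReal.ofReal κ * μ U := mul_le_mul_right hUb _
        _ = ∑' p : ℕ × ℕ × Finset G,
              ENNReal.ofReal κ * ((((S p).card : ℝ≥0∞)) * μ (A p)) := by
            rw [hUμ, ENNReal.tsum_mul_left]
        _ ≤ ∑' p : ℕ × ℕ × Finset G,
              (((T * Cs p : Finset G).card : ℝ≥0∞)) * μ (A p) :=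
            ENNReal.tsum_le_tsum hcoeff
        _ = μ (⋃ t ∈ T, α.act t '' B) := hTBμ.symm
    have hreal : 1 - ε' < κ * (1 - 9 * εs) := by
      rw [hκdef]
      nlinarith [hεs0.le, hε'0, hT1, hεs200, hTb]
    have hchain1 : 1 - ENNReal.ofReal ε ≤ 1 - ENNReal.ofReal ε' :=
      tsub_le_tsub_left (ENNReal.ofReal_le_ofReal (min_le_left _ _)) 1
    have hchain2 : (1 : ℝ≥0∞) - ENNReal.ofReal ε' = ENNReal.ofReal (1 - ε') := by
      rw [ENNReal.ofReal_sub _ hε'0.le, ENNReal.ofReal_one]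
    have hchain3 : ENNReal.ofReal (1 - ε') < ENNReal.ofReal (κ * (1 - 9 * εs)) := by
      rw [ENNReal.ofReal_lt_ofReal_iff (by nlinarith)]
      exact hreal
    calc 1 - ENNReal.ofReal ε ≤ 1 - ENNReal.ofReal ε' := hchain1
      _ = ENNReal.ofReal (1 - ε') := hchain2
      _ < ENNReal.ofReal (κ * (1 - 9 * εs)) := hchain3
      _ ≤ μ (⋃ t ∈ T, α.act t '' B) := hfinal


end Main

/-- Rohlin lemma for tiles, Ornstein–Weiss. If `G` is a countable
amenable group, `T` a tile for `G`, and `G ↷ (X, μ)` an essentially free p.m.p.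
action on a standard probability space, then for every `ε > 0` there is a Borel set
`B` with `{tB}_{t ∈ T}` pairwise disjoint and `μ(⋃_{t ∈ T} tB) > 1 - ε`. -/
theorem rohlin_lemma_for_tiles
    {G : Type*} [Group G] [Countable G]
    (hamen : ∃ Fseq : ℕ → Finset G, IsFolnerSeq Fseq)
    (T : Finset G) (hT : IsTile T)
    {X : Type*} [MeasurableSpace X] [StandardBorelSpace X]
    (μ : Measure X) [IsProbabilityMeasure μ]
    (α : PMP G X μ) (hα : α.EssFree)
    (ε : ℝ) (hε : 0 < ε) :
    ∃ B : Set X, MeasurableSet B ∧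
      ((T : Set G).Pairwise fun s t => Disjoint (α.act s '' B) (α.act t '' B)) ∧
      μ (⋃ t ∈ T, α.act t '' B) > 1 - ENNReal.ofReal ε := by
  exact rohlin_lemma_for_tiles' hamen T hT μ α hα ε hε
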